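/- Let S be a real n×m matrix whose SR graph G(S) satisfies Condition (*): every e-cycle of G(S) is an s-cycle, and there do not exist two e-cycles of G(S) with distinct edge sets having S-to-R intersection. Then S is SSD: every square submatrix of S is either sign nonsingular or has determinant zero. -/

import Mathlib

namespace SRGraph

variable {n m : ℕ}

/-- A cycle of the SR graph `G(S)`: `r ≥ 2` together with injective maps
`a : Fin r → Fin n` (S-vertices) and `b : Fin r → Fin m` (R-vertices) such that the
entries `S (a j) (b j)` and `S (a j) (b (j+1))` (indices mod `r`) are all nonzero. -/
def IsCyc (S : Matrix (Fin n) (Fin m) ℝ) {r : ℕ} (a : Fin r → Fin n) (b : Fin r → Fin m) :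
    Prop :=
  2 ≤ r ∧ Function.Injective a ∧ Function.Injective b ∧
    (∀ j, S (a j) (b j) ≠ 0) ∧ (∀ j, S (a j) (b (finRotate r j)) ≠ 0)

/-- The parity `P(C) = (-1)^r ∏_j sign(S (a j) (b j)) · sign(S (a j) (b (j+1)))` of a
cycle; the cycle is an e-cycle if this is `1` and an o-cycle if it is `-1`. -/
noncomputable def parity (S : Matrix (Fin n) (Fin m) ℝ) {r : ℕ}
    (a : Fin r → Fin n) (b : Fin r → Fin m) : ℝ :=
  (-1 : ℝ) ^ r *
    ∏ j : Fin r, Real.sign (S (a j) (b j)) * Real.sign (S (a j) (b (finRotate r j)))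

/-- A cycle is an s-cycle when the products of the absolute values of the entries on the
two halves of its disconnecting partition agree. -/
def IsSCyc (S : Matrix (Fin n) (Fin m) ℝ) {r : ℕ} (a : Fin r → Fin n)
    (b : Fin r → Fin m) : Prop :=
  ∏ j : Fin r, |S (a j) (b j)| = ∏ j : Fin r, |S (a j) (b (finRotate r j))|

/-- The edge set of a cycle: the `2r` pairs `(a j, b j)` and `(a j, b (j+1))`. -/
def cycEdges {r : ℕ} (a : Fin r → Fin n) (b : Fin r → Fin m) : Set (Fin n × Fin m) :=
  {e | ∃ j : Fin r, e = (a j, b j) ∨ e = (a j, b (finRotate r j))}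

/-- The vertex set of a cycle inside `Fin n ⊕ Fin m`. -/
def cycVerts {r : ℕ} (a : Fin r → Fin n) (b : Fin r → Fin m) : Set (Fin n ⊕ Fin m) :=
  Set.range (Sum.inl ∘ a) ∪ Set.range (Sum.inr ∘ b)

/-- Adjacency relation on `Fin n ⊕ Fin m` determined by a set `E` of (S,R) edges. -/
def adjOf (E : Set (Fin n × Fin m)) : (Fin n ⊕ Fin m) → (Fin n ⊕ Fin m) → Prop
  | Sum.inl i, Sum.inr j => (i, j) ∈ E
  | Sum.inr j, Sum.inl i => (i, j) ∈ E
  | _, _ => False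

/-- The connected component of `v` in the subgraph with vertex set `V` and edge set `E`. -/
def componentOf (E : Set (Fin n × Fin m)) (V : Set (Fin n ⊕ Fin m))
    (v : Fin n ⊕ Fin m) : Set (Fin n ⊕ Fin m) :=
  {x ∈ V | Relation.ReflTransGen (adjOf E) v x}

/-- Vertex set of an S-to-R path `u 0 – w 0 – u 1 – ⋯ – u p – w p`. -/
def pathVerts {p : ℕ} (u : Fin (p + 1) → Fin n) (w : Fin (p + 1) → Fin m) :
    Set (Fin n ⊕ Fin m) :=
  Set.range (Sum.inl ∘ u) ∪ Set.range (Sum.inr ∘ w)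

/-- Edge set (the `2p+1` pairs `(u i, w i)` and `(u (i+1), w i)`) of an S-to-R path. -/
def pathEdges {p : ℕ} (u : Fin (p + 1) → Fin n) (w : Fin (p + 1) → Fin m) :
    Set (Fin n × Fin m) :=
  {e | ∃ i : Fin (p + 1), e = (u i, w i)} ∪ {e | ∃ i : Fin p, e = (u i.succ, w i.castSucc)}

/-- The subgraph with (nonempty) vertex set `V` and edge set `E` has all of its connected
components equal to paths joining an S-vertex to an R-vertex. -/
def SRIntersection (V : Set (Fin n ⊕ Fin m)) (E : Set (Fin n × Fin m)) : Prop :=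
  V.Nonempty ∧
    ∀ v ∈ V, ∃ (p : ℕ) (u : Fin (p + 1) → Fin n) (w : Fin (p + 1) → Fin m),
      Function.Injective u ∧ Function.Injective w ∧
      pathVerts u w = componentOf E V v ∧
      pathEdges u w = {e ∈ E | Sum.inl e.1 ∈ componentOf E V v}

/-- `G(S)` contains two e-cycles, with distinct edge sets, having S-to-R intersection. -/
def TwoECyclesWithSRIntersection (S : Matrix (Fin n) (Fin m) ℝ) : Prop :=
  ∃ (r₁ : ℕ) (a₁ : Fin r₁ → Fin n) (b₁ : Fin r₁ → Fin m)
    (r₂ : ℕ) (a₂ : Fin r₂ → Fin n) (b₂ : Fin r₂ → Fin m),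
    IsCyc S a₁ b₁ ∧ parity S a₁ b₁ = 1 ∧ IsCyc S a₂ b₂ ∧ parity S a₂ b₂ = 1 ∧
    cycEdges a₁ b₁ ≠ cycEdges a₂ b₂ ∧
    SRIntersection (cycVerts a₁ b₁ ∩ cycVerts a₂ b₂) (cycEdges a₁ b₁ ∩ cycEdges a₂ b₂)

/-- Condition (*): all e-cycles are s-cycles, and no two e-cycles (with distinct edge
sets) have S-to-R intersection. -/
def ConditionStar (S : Matrix (Fin n) (Fin m) ℝ) : Prop :=
  (∀ (r : ℕ) (a : Fin r → Fin n) (b : Fin r → Fin m),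
      IsCyc S a b → parity S a b = 1 → IsSCyc S a b) ∧
  ¬ TwoECyclesWithSRIntersection S

/-- Two real matrices have the same sign pattern. -/
def SameSignPattern {k l : ℕ} (B M : Matrix (Fin k) (Fin l) ℝ) : Prop :=
  ∀ i j, Real.sign (B i j) = Real.sign (M i j)

/-- A square real matrix is sign nonsingular if every matrix with the same sign pattern
has nonzero determinant. -/
def SignNonsingular {k : ℕ} (M : Matrix (Fin k) (Fin k) ℝ) : Prop :=
  ∀ B : Matrix (Fin k) (Fin k) ℝ, SameSignPattern B M → B.det ≠ 0

/-- A square real matrix is sign singular if every matrix with the same sign pattern has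
zero determinant. -/
def SignSingular {k : ℕ} (M : Matrix (Fin k) (Fin k) ℝ) : Prop :=
  ∀ B : Matrix (Fin k) (Fin k) ℝ, SameSignPattern B M → B.det = 0

/-- `S` is strongly sign determined: every square submatrix of `S` is sign nonsingular or
has determinant zero. -/
def SSD (S : Matrix (Fin n) (Fin m) ℝ) : Prop :=
  ∀ (k : ℕ) (ρ : Fin k → Fin n) (c : Fin k → Fin m),
    Function.Injective ρ → Function.Injective c →
    SignNonsingular (S.submatrix ρ c) ∨ (S.submatrix ρ c).det = 0

end SRGraph
namespace SSDProof
open SRGraph Equiv Finset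

/-! ### Real.sign helpers -/

lemma rsign_pm {x : ℝ} (hx : x ≠ 0) : Real.sign x = 1 ∨ Real.sign x = -1 := by
  rcases lt_trichotomy x 0 with h | h | h
  · exact Or.inr (Real.sign_of_neg h)
  · exact absurd h hx
  · exact Or.inl (Real.sign_of_pos h)

lemma rsign_sq {x : ℝ} (hx : x ≠ 0) : Real.sign x * Real.sign x = 1 := by
  rcases rsign_pm hx with h | h <;> rw [h] <;> norm_num

lemma eq_sign_mul_abs (x : ℝ) : x = Real.sign x * |x| := by
  rcases lt_trichotomy x 0 with h | h | h
  · rw [Real.sign_of_neg h, abs_of_neg h]; ring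
  · simp [h]
  · rw [Real.sign_of_pos h, abs_of_pos h]; ring

lemma rsign_ne_zero {x : ℝ} (hx : x ≠ 0) : Real.sign x ≠ 0 := by
  rcases rsign_pm hx with h | h <;> rw [h] <;> norm_num

lemma prod_neg {α : Type*} (s : Finset α) (f : α → ℝ) :
    ∏ x ∈ s, (-(f x)) = (-1 : ℝ) ^ s.card * ∏ x ∈ s, f x := by
  calc ∏ x ∈ s, (-(f x)) = ∏ x ∈ s, ((fun _ => (-1 : ℝ)) x * f x) :=
        Finset.prod_congr rfl (fun x _ => by ring)
    _ = (∏ _x ∈ s, (-1 : ℝ)) * ∏ x ∈ s, f x := Finset.prod_mul_distrib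
    _ = (-1 : ℝ) ^ s.card * ∏ x ∈ s, f x := by rw [Finset.prod_const]

/-! ### Fin helpers -/

lemma finRotate_val {N : ℕ} (t : Fin N) : ((finRotate N t : Fin N) : ℕ) = ((t : ℕ) + 1) % N := by
  cases N with
  | zero => exact t.elim0
  | succ n =>
    rw [finRotate_succ_apply, Fin.val_add, Fin.val_one']
    conv_rhs => rw [Nat.add_mod]
    rw [Nat.mod_eq_of_lt t.isLt]

lemma finRotate_symm_val {N : ℕ} (t : Fin N) :
    (((finRotate N).symm t : Fin N) : ℕ) = ((t : ℕ) + (N - 1)) % N := by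
  have hN : 0 < N := t.pos
  have key : finRotate N ⟨((t : ℕ) + (N - 1)) % N, Nat.mod_lt _ hN⟩ = t := by
    apply Fin.ext
    rw [finRotate_val]
    show ((((t : ℕ) + (N - 1)) % N) + 1) % N = (t : ℕ)
    rw [Nat.mod_add_mod]
    have : (t : ℕ) + (N - 1) + 1 = (t : ℕ) + N := by omega
    rw [this, Nat.add_mod_right, Nat.mod_eq_of_lt t.isLt]
  have h2 := congrArg (finRotate N).symm key
  rw [Equiv.symm_apply_apply] at h2
  rw [← h2]

/-! ### cycle powers -/

variable {k : ℕ} {c : Equiv.Perm (Fin k)} {x0 : Fin k}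

lemma pow_fix_iff (hc : c.IsCycle) (hx : x0 ∈ c.support) (d : ℕ) :
    (c ^ d) x0 = x0 ↔ c.support.card ∣ d := by
  constructor
  · intro h
    have h1 : c ^ d = 1 := hc.pow_eq_one_iff.mpr ⟨x0, Equiv.Perm.mem_support.mp hx, h⟩
    rw [← hc.orderOf]
    exact orderOf_dvd_iff_pow_eq_one.mpr h1
  · rintro ⟨e, rfl⟩
    rw [pow_mul, ← hc.orderOf, pow_orderOf_eq_one, one_pow, Equiv.Perm.one_apply]

lemma cyc_pow_eq_iff (hc : c.IsCycle) (hx : x0 ∈ c.support) (a b : ℕ) :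
    (c ^ a) x0 = (c ^ b) x0 ↔ a % c.support.card = b % c.support.card := by
  set r := c.support.card with hr
  have hrpos : 0 < r := lt_of_lt_of_le (by norm_num) hc.two_le_card_support
  have hmod : ∀ e : ℕ, (c ^ (e % r)) x0 = (c ^ e) x0 := by
    intro e; rw [hr, ← hc.orderOf, pow_mod_orderOf]
  constructor
  · intro h
    have h' : (c ^ (a % r)) x0 = (c ^ (b % r)) x0 := by rw [hmod, hmod, h]
    have key : ∀ a' b' : ℕ, a' ≤ b' → b' < r → (c ^ a') x0 = (c ^ b') x0 → a' = b' := by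
      intro a' b' hab hbr he
      have : (c ^ a') ((c ^ (b' - a')) x0) = (c ^ a') x0 := by
        rw [← Equiv.Perm.mul_apply, ← pow_add]
        rw [Nat.add_sub_cancel' hab]
        exact he.symm
      have hfix : (c ^ (b' - a')) x0 = x0 := (c ^ a').injective this
      have hdvd := (pow_fix_iff hc hx _).mp hfix
      rw [← hr] at hdvd
      have hz : b' - a' = 0 := Nat.eq_zero_of_dvd_of_lt hdvd (by omega)
      omega
    rcases le_total (a % r) (b % r) with hle | hle
    · exact key _ _ hle (Nat.mod_lt _ hrpos) h'
    · exact (key _ _ hle (Nat.mod_lt _ hrpos) h'.symm).symm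
  · intro h
    rw [← hmod a, ← hmod b, h]

lemma image_pow_eq_support (hc : c.IsCycle) (hx : x0 ∈ c.support) :
    (Finset.range c.support.card).image (fun t => (c ^ t) x0) = c.support := by
  have hrpos : 0 < c.support.card := lt_of_lt_of_le (by norm_num) hc.two_le_card_support
  have hsub : (Finset.range c.support.card).image (fun t => (c ^ t) x0) ⊆ c.support := by
    intro y hy
    simp only [Finset.mem_image, Finset.mem_range] at hy
    obtain ⟨t, _, rfl⟩ := hy
    exact Equiv.Perm.pow_apply_mem_support.mpr hx
  have hinj : Set.InjOn (fun t => (c ^ t) x0) (Finset.range c.support.card) := by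
    intro a ha b hb he
    simp only [Finset.coe_range, Set.mem_Iio] at ha hb
    have := (cyc_pow_eq_iff hc hx a b).mp he
    rwa [Nat.mod_eq_of_lt ha, Nat.mod_eq_of_lt hb] at this
  apply Finset.eq_of_subset_of_card_le hsub
  rw [Finset.card_image_of_injOn hinj, Finset.card_range]

lemma mem_support_iff_pow (hc : c.IsCycle) (hx : x0 ∈ c.support) (y : Fin k) :
    y ∈ c.support ↔ ∃ t, t < c.support.card ∧ (c ^ t) x0 = y := by
  have himg := image_pow_eq_support hc hx
  constructor
  · intro hy
    rw [← himg] at hy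
    simp only [Finset.mem_image, Finset.mem_range] at hy
    obtain ⟨t, ht, rfl⟩ := hy
    exact ⟨t, ht, rfl⟩
  · rintro ⟨t, _, rfl⟩
    exact Equiv.Perm.pow_apply_mem_support.mpr hx

lemma prod_pow_supp (hc : c.IsCycle) (hx : x0 ∈ c.support) (g : Fin k → ℝ) :
    ∏ t ∈ Finset.range c.support.card, g ((c ^ t) x0) = ∏ x ∈ c.support, g x := by
  have himg := image_pow_eq_support hc hx
  conv_rhs => rw [← himg]
  rw [Finset.prod_image]
  intro a ha b hb he
  simp only [Finset.coe_range, Set.mem_Iio, Finset.mem_coe, Finset.mem_range] at ha hb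
  have := (cyc_pow_eq_iff hc hx a b).mp he
  rwa [Nat.mod_eq_of_lt ha, Nat.mod_eq_of_lt hb] at this

end SSDProof
namespace SSDProof
open SRGraph Function

variable {n m : ℕ}

lemma adjOf_symm (E : Set (Fin n × Fin m)) : Symmetric (adjOf E) := by
  intro x y h
  cases x <;> cases y <;> first | exact h.elim | exact h

lemma mem_pathVerts_inl {p : ℕ} (u : Fin (p+1) → Fin n) (w : Fin (p+1) → Fin m)
    (i : Fin (p+1)) : Sum.inl (u i) ∈ pathVerts u w :=
  Or.inl ⟨i, rfl⟩

lemma mem_pathVerts_inr {p : ℕ} (u : Fin (p+1) → Fin n) (w : Fin (p+1) → Fin m)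
    (i : Fin (p+1)) : Sum.inr (w i) ∈ pathVerts u w :=
  Or.inr ⟨i, rfl⟩

lemma path_reach {p : ℕ} (u : Fin (p+1) → Fin n) (w : Fin (p+1) → Fin m) :
    ∀ (j : ℕ) (hj : j < p+1),
      Relation.ReflTransGen (adjOf (pathEdges u w)) (Sum.inl (u 0)) (Sum.inl (u ⟨j, hj⟩)) ∧
      Relation.ReflTransGen (adjOf (pathEdges u w)) (Sum.inl (u 0)) (Sum.inr (w ⟨j, hj⟩)) := by
  intro j
  induction j with
  | zero =>
    intro hj
    have h0 : (⟨0, hj⟩ : Fin (p+1)) = 0 := rfl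
    rw [h0]
    refine ⟨Relation.ReflTransGen.refl, Relation.ReflTransGen.single ?_⟩
    show (u 0, w 0) ∈ pathEdges u w
    exact Or.inl ⟨0, rfl⟩
  | succ j ih =>
    intro hj
    have hjp : j < p := by omega
    have hj1 : j < p + 1 := by omega
    obtain ⟨_, hw_reach⟩ := ih hj1
    set i : Fin p := ⟨j, hjp⟩
    have hs : (⟨j+1, hj⟩ : Fin (p+1)) = i.succ := rfl
    have hcs : (⟨j, hj1⟩ : Fin (p+1)) = i.castSucc := rfl
    rw [hs]
    have step1 : Relation.ReflTransGen (adjOf (pathEdges u w)) (Sum.inl (u 0))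
        (Sum.inl (u i.succ)) := by
      refine hw_reach.tail ?_
      show adjOf (pathEdges u w) (Sum.inr (w ⟨j, hj1⟩)) (Sum.inl (u i.succ))
      show (u i.succ, w ⟨j, hj1⟩) ∈ pathEdges u w
      rw [hcs]
      exact Or.inr ⟨i, rfl⟩
    refine ⟨step1, step1.tail ?_⟩
    show (u i.succ, w i.succ) ∈ pathEdges u w
    exact Or.inl ⟨i.succ, rfl⟩

lemma path_reach' {p : ℕ} (u : Fin (p+1) → Fin n) (w : Fin (p+1) → Fin m) :
    ∀ v ∈ pathVerts u w,
      Relation.ReflTransGen (adjOf (pathEdges u w)) (Sum.inl (u 0)) v := by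
  rintro v (⟨i, rfl⟩ | ⟨i, rfl⟩)
  · have := (path_reach u w i.val i.isLt).1
    simpa using this
  · have := (path_reach u w i.val i.isLt).2
    simpa using this

lemma path_componentOf {p : ℕ} (u : Fin (p+1) → Fin n) (w : Fin (p+1) → Fin m)
    {v : Fin n ⊕ Fin m} (hv : v ∈ pathVerts u w) :
    componentOf (pathEdges u w) (pathVerts u w) v = pathVerts u w := by
  ext x
  constructor
  · exact fun h => h.1
  · intro hx
    refine ⟨hx, ?_⟩
    have hsym : Symmetric (Relation.ReflTransGen (adjOf (pathEdges u w))) := fun a b h =>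
      @Std.Symm.symm _ _ (@Relation.ReflTransGen.stdSymm _ _ ⟨adjOf_symm (pathEdges u w)⟩) a b h
    exact (hsym (path_reach' u w v hv)).trans (path_reach' u w x hx)

lemma path_SRI {p : ℕ} (u : Fin (p+1) → Fin n) (w : Fin (p+1) → Fin m)
    (hu : Function.Injective u) (hw : Function.Injective w) :
    SRIntersection (pathVerts u w) (pathEdges u w) := by
  refine ⟨⟨Sum.inl (u 0), mem_pathVerts_inl u w 0⟩, ?_⟩
  intro v hv
  refine ⟨p, u, w, hu, hw, (path_componentOf u w hv).symm, ?_⟩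
  rw [path_componentOf u w hv]
  ext e
  constructor
  · intro he
    refine ⟨he, ?_⟩
    rcases he with ⟨i, hi⟩ | ⟨i, hi⟩
    · rw [hi]; exact mem_pathVerts_inl u w i
    · rw [hi]; exact mem_pathVerts_inl u w i.succ
  · exact fun h => h.1

/-! ### transfer along injections -/

section Transfer

variable {k r : ℕ} {ρ : Fin k → Fin n} {κ : Fin k → Fin m}

lemma sum_map_inj (hρ : Injective ρ) (hκ : Injective κ) : Injective (Sum.map ρ κ) := by
  intro x y h
  cases x <;> cases y <;>
    simp only [Sum.map_inl, Sum.map_inr, Sum.inl.injEq, Sum.inr.injEq, reduceCtorEq] at h <;>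
    simp only [Sum.inl.injEq, Sum.inr.injEq]
  · exact hρ h
  · exact hκ h

lemma prod_map_inj (hρ : Injective ρ) (hκ : Injective κ) : Injective (Prod.map ρ κ) := by
  intro x y h
  simp only [Prod.map, Prod.ext_iff] at h
  exact Prod.ext (hρ h.1) (hκ h.2)

lemma cycEdges_comp (a : Fin r → Fin k) (b : Fin r → Fin k) :
    cycEdges (n := n) (m := m) (ρ ∘ a) (κ ∘ b) = Prod.map ρ κ '' cycEdges a b := by
  ext e
  constructor
  · rintro ⟨j, hj | hj⟩
    · exact ⟨(a j, b j), ⟨j, Or.inl rfl⟩, hj.symm⟩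
    · exact ⟨(a j, b (finRotate r j)), ⟨j, Or.inr rfl⟩, hj.symm⟩
  · rintro ⟨e0, ⟨j, hj | hj⟩, rfl⟩
    · exact ⟨j, Or.inl (by rw [hj]; rfl)⟩
    · exact ⟨j, Or.inr (by rw [hj]; rfl)⟩

lemma cycVerts_comp (a : Fin r → Fin k) (b : Fin r → Fin k) :
    cycVerts (n := n) (m := m) (ρ ∘ a) (κ ∘ b) = Sum.map ρ κ '' cycVerts a b := by
  ext v
  constructor
  · rintro (⟨j, rfl⟩ | ⟨j, rfl⟩)
    · exact ⟨Sum.inl (a j), Or.inl ⟨j, rfl⟩, rfl⟩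
    · exact ⟨Sum.inr (b j), Or.inr ⟨j, rfl⟩, rfl⟩
  · rintro ⟨v0, (⟨j, rfl⟩ | ⟨j, rfl⟩), rfl⟩
    · exact Or.inl ⟨j, rfl⟩
    · exact Or.inr ⟨j, rfl⟩

lemma pathVerts_comp {p : ℕ} (u : Fin (p+1) → Fin k) (w : Fin (p+1) → Fin k) :
    pathVerts (n := n) (m := m) (ρ ∘ u) (κ ∘ w) = Sum.map ρ κ '' pathVerts u w := by
  ext v
  constructor
  · rintro (⟨j, rfl⟩ | ⟨j, rfl⟩)
    · exact ⟨Sum.inl (u j), Or.inl ⟨j, rfl⟩, rfl⟩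
    · exact ⟨Sum.inr (w j), Or.inr ⟨j, rfl⟩, rfl⟩
  · rintro ⟨v0, (⟨j, rfl⟩ | ⟨j, rfl⟩), rfl⟩
    · exact Or.inl ⟨j, rfl⟩
    · exact Or.inr ⟨j, rfl⟩

lemma pathEdges_comp {p : ℕ} (u : Fin (p+1) → Fin k) (w : Fin (p+1) → Fin k) :
    pathEdges (n := n) (m := m) (ρ ∘ u) (κ ∘ w) = Prod.map ρ κ '' pathEdges u w := by
  ext e
  constructor
  · rintro (⟨i, hi⟩ | ⟨i, hi⟩)
    · exact ⟨(u i, w i), Or.inl ⟨i, rfl⟩, hi.symm⟩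
    · exact ⟨(u i.succ, w i.castSucc), Or.inr ⟨i, rfl⟩, hi.symm⟩
  · rintro ⟨e0, (⟨i, hi⟩ | ⟨i, hi⟩), rfl⟩
    · exact Or.inl ⟨i, by rw [hi]; rfl⟩
    · exact Or.inr ⟨i, by rw [hi]; rfl⟩

lemma adj_map {E : Set (Fin k × Fin k)} {x y : Fin k ⊕ Fin k} (h : adjOf E x y) :
    adjOf (Prod.map ρ κ '' E) (Sum.map ρ κ x) (Sum.map ρ κ y) := by
  cases x <;> cases y <;> first | exact h.elim | exact ⟨_, h, rfl⟩

lemma adj_map_rev (hρ : Injective ρ) (hκ : Injective κ) {E : Set (Fin k × Fin k)}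
    {x : Fin k ⊕ Fin k} {z' : Fin n ⊕ Fin m}
    (h : adjOf (Prod.map ρ κ '' E) (Sum.map ρ κ x) z') :
    ∃ z, z' = Sum.map ρ κ z ∧ adjOf E x z := by
  cases x with
  | inl i =>
    cases z' with
    | inl _ => exact h.elim
    | inr j' =>
      obtain ⟨⟨i0, j0⟩, he, hq⟩ := h
      simp only [Prod.map_apply, Prod.mk.injEq] at hq
      have : i0 = i := hρ hq.1
      subst this
      exact ⟨Sum.inr j0, by rw [← hq.2]; rfl, he⟩
  | inr j =>
    cases z' with
    | inr _ => exact h.elim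
    | inl i' =>
      obtain ⟨⟨i0, j0⟩, he, hq⟩ := h
      simp only [Prod.map_apply, Prod.mk.injEq] at hq
      have : j0 = j := hκ hq.2
      subst this
      exact ⟨Sum.inl i0, by rw [← hq.1]; rfl, he⟩

lemma rtg_map {E : Set (Fin k × Fin k)} {x y : Fin k ⊕ Fin k}
    (h : Relation.ReflTransGen (adjOf E) x y) :
    Relation.ReflTransGen (adjOf (Prod.map ρ κ '' E)) (Sum.map ρ κ x) (Sum.map ρ κ y) := by
  induction h with
  | refl => exact Relation.ReflTransGen.refl
  | tail _ hadj ih => exact ih.tail (adj_map hadj)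

lemma rtg_map_rev (hρ : Injective ρ) (hκ : Injective κ) {E : Set (Fin k × Fin k)}
    {v : Fin k ⊕ Fin k} {z' : Fin n ⊕ Fin m}
    (h : Relation.ReflTransGen (adjOf (Prod.map ρ κ '' E)) (Sum.map ρ κ v) z') :
    ∃ z, z' = Sum.map ρ κ z ∧ Relation.ReflTransGen (adjOf E) v z := by
  induction h with
  | refl => exact ⟨v, rfl, Relation.ReflTransGen.refl⟩
  | tail _ hadj ih =>
    obtain ⟨y, rfl, hy⟩ := ih
    obtain ⟨z, rfl, hz⟩ := adj_map_rev hρ hκ hadj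
    exact ⟨z, rfl, hy.tail hz⟩

lemma componentOf_image (hρ : Injective ρ) (hκ : Injective κ)
    (E : Set (Fin k × Fin k)) (V : Set (Fin k ⊕ Fin k)) (v : Fin k ⊕ Fin k) :
    componentOf (Prod.map ρ κ '' E) (Sum.map ρ κ '' V) (Sum.map ρ κ v)
      = Sum.map ρ κ '' componentOf E V v := by
  ext x'
  constructor
  · rintro ⟨hx'V, hrtg⟩
    obtain ⟨x1, hx1V, rfl⟩ := hx'V
    obtain ⟨z, hzeq, hz⟩ := rtg_map_rev hρ hκ hrtg
    have : z = x1 := sum_map_inj hρ hκ hzeq.symm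
    subst this
    exact ⟨z, ⟨hx1V, hz⟩, rfl⟩
  · rintro ⟨x, ⟨hxV, hrtg⟩, rfl⟩
    exact ⟨⟨x, hxV, rfl⟩, rtg_map hrtg⟩

lemma SRI_image (hρ : Injective ρ) (hκ : Injective κ)
    {E : Set (Fin k × Fin k)} {V : Set (Fin k ⊕ Fin k)}
    (h : SRIntersection V E) :
    SRIntersection (Sum.map ρ κ '' V) (Prod.map ρ κ '' E) := by
  obtain ⟨hne, hpaths⟩ := h
  refine ⟨hne.image _, ?_⟩
  rintro v' ⟨v, hv, rfl⟩
  obtain ⟨p, u, w, hu, hw, hVert, hEdge⟩ := hpaths v hv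
  refine ⟨p, ρ ∘ u, κ ∘ w, hρ.comp hu, hκ.comp hw, ?_, ?_⟩
  · rw [pathVerts_comp, hVert, componentOf_image hρ hκ]
  · rw [pathEdges_comp, hEdge, componentOf_image hρ hκ]
    ext e'
    constructor
    · rintro ⟨e, ⟨heE, hin⟩, rfl⟩
      exact ⟨⟨e, heE, rfl⟩, ⟨Sum.inl e.1, hin, rfl⟩⟩
    · rintro ⟨⟨e, heE, rfl⟩, hin⟩
      refine ⟨e, ⟨heE, ?_⟩, rfl⟩
      obtain ⟨z, hz, hzeq⟩ := hin
      have : z = Sum.inl e.1 := by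
        apply sum_map_inj hρ hκ
        rw [hzeq]; rfl
      rwa [this] at hz

lemma twoE_transfer (S : Matrix (Fin n) (Fin m) ℝ)
    (hρ : Injective ρ) (hκ : Injective κ)
    (h : TwoECyclesWithSRIntersection (S.submatrix ρ κ)) :
    TwoECyclesWithSRIntersection S := by
  obtain ⟨r₁, a₁, b₁, r₂, a₂, b₂, hc₁, hp₁, hc₂, hp₂, hne, hsri⟩ := h
  refine ⟨r₁, ρ ∘ a₁, κ ∘ b₁, r₂, ρ ∘ a₂, κ ∘ b₂, ?_, hp₁, ?_, hp₂, ?_, ?_⟩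
  · obtain ⟨h2, ha, hb, hd, ho⟩ := hc₁
    exact ⟨h2, hρ.comp ha, hκ.comp hb, hd, ho⟩
  · obtain ⟨h2, ha, hb, hd, ho⟩ := hc₂
    exact ⟨h2, hρ.comp ha, hκ.comp hb, hd, ho⟩
  · rw [cycEdges_comp, cycEdges_comp]
    intro hcontra
    exact hne (Set.image_injective.mpr (prod_map_inj hρ hκ) hcontra)
  · rw [cycEdges_comp, cycEdges_comp, cycVerts_comp, cycVerts_comp,
      ← Set.image_inter (sum_map_inj hρ hκ), ← Set.image_inter (prod_map_inj hρ hκ)]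
    exact SRI_image hρ hκ hsri

lemma conditionStar_submatrix (S : Matrix (Fin n) (Fin m) ℝ)
    (hρ : Injective ρ) (hκ : Injective κ) (hS : ConditionStar S) :
    ConditionStar (S.submatrix ρ κ) := by
  constructor
  · intro r a b hcyc hpar
    obtain ⟨h2, ha, hb, hd, ho⟩ := hcyc
    exact hS.1 r (ρ ∘ a) (κ ∘ b) ⟨h2, hρ.comp ha, hκ.comp hb, hd, ho⟩ hpar
  · intro h
    exact hS.2 (twoE_transfer S hρ hκ h)

end Transfer

end SSDProof
namespace SSDProof
open SRGraph Equiv Finset Function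

variable {k : ℕ}

/-- validity of a permutation w.r.t. `M`: all its "arcs" are nonzero entries. -/
def Vld (M : Matrix (Fin k) (Fin k) ℝ) (g : Equiv.Perm (Fin k)) : Prop :=
  ∀ x ∈ g.support, M x (g x) ≠ 0

/-- the e/o weight of a diagonal-type cycle. -/
noncomputable def W (M : Matrix (Fin k) (Fin k) ℝ) (g : Equiv.Perm (Fin k)) : ℝ :=
  ∏ x ∈ g.support, (-(Real.sign (M x x) * Real.sign (M x (g x))))

/-- `g` is (the permutation form of) an e-cycle of the SR graph of `M`. -/
def EC (M : Matrix (Fin k) (Fin k) ℝ) (g : Equiv.Perm (Fin k)) : Prop :=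
  g.IsCycle ∧ Vld M g ∧ W M g = 1

variable {M : Matrix (Fin k) (Fin k) ℝ} {g : Equiv.Perm (Fin k)} {x0 : Fin k}

lemma W_eq (M : Matrix (Fin k) (Fin k) ℝ) (g : Equiv.Perm (Fin k)) :
    W M g = (-1 : ℝ) ^ g.support.card
      * ∏ x ∈ g.support, (Real.sign (M x x) * Real.sign (M x (g x))) :=
  prod_neg g.support _

lemma W_pm (hd : ∀ i, M i i ≠ 0) (hg : Vld M g) : W M g = 1 ∨ W M g = -1 := by
  rw [← mul_self_eq_one_iff]
  unfold W
  rw [← Finset.prod_mul_distrib]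
  apply Finset.prod_eq_one
  intro x hx
  have h1 := rsign_sq (hd x)
  have h2 := rsign_sq (hg x hx)
  ring_nf
  calc Real.sign (M x x) ^ 2 * Real.sign (M x (g x)) ^ 2
      = (Real.sign (M x x) * Real.sign (M x x)) *
        (Real.sign (M x (g x)) * Real.sign (M x (g x))) := by ring
    _ = 1 := by rw [h1, h2, mul_one]

/-- enumeration map of a diagonal-type cycle. -/
def dA (g : Equiv.Perm (Fin k)) (x0 : Fin k) {r : ℕ} : Fin r → Fin k :=
  fun t => (g ^ (t : ℕ)) x0

lemma dA_inj (hc : g.IsCycle) (hx : x0 ∈ g.support) :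
    Injective (dA g x0 (r := g.support.card)) := by
  intro a b h
  have := (cyc_pow_eq_iff hc hx a b).mp h
  rw [Nat.mod_eq_of_lt a.isLt, Nat.mod_eq_of_lt b.isLt] at this
  exact Fin.ext this

lemma dA_mem (t : Fin g.support.card) (hx : x0 ∈ g.support) :
    dA g x0 t ∈ g.support :=
  Equiv.Perm.pow_apply_mem_support.mpr hx

lemma dA_rot (hc : g.IsCycle) (hx : x0 ∈ g.support) (t : Fin g.support.card) :
    dA g x0 (finRotate _ t) = g (dA g x0 t) := by
  unfold dA
  rw [finRotate_val]
  have hmod := pow_mod_orderOf g ((t : ℕ) + 1)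
  rw [hc.orderOf] at hmod
  rw [hmod, pow_succ', Equiv.Perm.mul_apply]

lemma dA_surj (hc : g.IsCycle) (hx : x0 ∈ g.support) {y : Fin k} (hy : y ∈ g.support) :
    ∃ t : Fin g.support.card, dA g x0 t = y := by
  obtain ⟨t, ht, hty⟩ := (mem_support_iff_pow hc hx y).mp hy
  exact ⟨⟨t, ht⟩, hty⟩

lemma dA_prod (hc : g.IsCycle) (hx : x0 ∈ g.support) (h : Fin k → ℝ) :
    ∏ t : Fin g.support.card, h (dA g x0 t) = ∏ x ∈ g.support, h x := by
  rw [show (fun t : Fin g.support.card => h (dA g x0 t))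
      = fun t : Fin g.support.card => (fun e : ℕ => h ((g ^ e) x0)) (t : ℕ) from rfl]
  rw [Fin.prod_univ_eq_prod_range (fun e => h ((g ^ e) x0)) g.support.card]
  exact prod_pow_supp hc hx h

lemma diag_IsCyc (hc : g.IsCycle) (hv : Vld M g) (hd : ∀ i, M i i ≠ 0)
    (hx : x0 ∈ g.support) :
    IsCyc M (dA g x0 (r := g.support.card)) (dA g x0) := by
  refine ⟨hc.two_le_card_support, dA_inj hc hx, dA_inj hc hx, ?_, ?_⟩
  · intro t
    exact hd _
  · intro t
    rw [dA_rot hc hx]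
    exact hv _ (dA_mem t hx)

lemma diag_parity (hc : g.IsCycle) (hx : x0 ∈ g.support) :
    parity M (dA g x0 (r := g.support.card)) (dA g x0) = W M g := by
  unfold parity
  have hrw : ∀ t : Fin g.support.card,
      Real.sign (M (dA g x0 t) (dA g x0 t))
        * Real.sign (M (dA g x0 t) (dA g x0 (finRotate _ t)))
      = Real.sign (M (dA g x0 t) (dA g x0 t))
        * Real.sign (M (dA g x0 t) (g (dA g x0 t))) := by
    intro t; rw [dA_rot hc hx]
  rw [Finset.prod_congr rfl (fun t _ => hrw t)]
  have key := dA_prod hc hx (fun x => Real.sign (M x x) * Real.sign (M x (g x)))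
  rw [key, W_eq]

/-- the edge set of a diagonal-type cycle. -/
def dE (g : Equiv.Perm (Fin k)) : Set (Fin k × Fin k) :=
  {e | e.1 ∈ g.support ∧ (e.2 = e.1 ∨ e.2 = g e.1)}

lemma diag_edges (hc : g.IsCycle) (hx : x0 ∈ g.support) :
    cycEdges (dA g x0 (r := g.support.card)) (dA g x0) = dE g := by
  ext e
  constructor
  · rintro ⟨t, rfl | rfl⟩
    · exact ⟨dA_mem t hx, Or.inl rfl⟩
    · rw [dA_rot hc hx]
      exact ⟨dA_mem t hx, Or.inr rfl⟩
  · rintro ⟨h1, h2 | h2⟩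
    · obtain ⟨t, ht⟩ := dA_surj hc hx h1
      refine ⟨t, Or.inl ?_⟩
      rw [Prod.ext_iff]
      exact ⟨ht.symm, h2.trans ht.symm⟩
    · obtain ⟨t, ht⟩ := dA_surj hc hx h1
      refine ⟨t, Or.inr ?_⟩
      rw [Prod.ext_iff]
      refine ⟨ht.symm, ?_⟩
      rw [dA_rot hc hx, h2, ht]

/-- the vertex set of a diagonal-type cycle. -/
def dV (g : Equiv.Perm (Fin k)) : Set (Fin k ⊕ Fin k) :=
  (Sum.inl '' (↑g.support : Set (Fin k))) ∪ (Sum.inr '' (↑g.support : Set (Fin k)))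

lemma diag_verts (hc : g.IsCycle) (hx : x0 ∈ g.support) :
    cycVerts (dA g x0 (r := g.support.card)) (dA g x0) = dV g := by
  ext v
  constructor
  · rintro (⟨t, rfl⟩ | ⟨t, rfl⟩)
    · exact Or.inl ⟨dA g x0 t, by simpa using dA_mem t hx, rfl⟩
    · exact Or.inr ⟨dA g x0 t, by simpa using dA_mem t hx, rfl⟩
  · rintro (⟨x, hxs, rfl⟩ | ⟨x, hxs, rfl⟩)
    · obtain ⟨t, rfl⟩ := dA_surj hc hx (by simpa using hxs)
      exact Or.inl ⟨t, rfl⟩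
    · obtain ⟨t, rfl⟩ := dA_surj hc hx (by simpa using hxs)
      exact Or.inr ⟨t, rfl⟩

lemma EC_to_sCyc (CS : ConditionStar M) (hd : ∀ i, M i i ≠ 0) (h : EC M g) :
    ∏ x ∈ g.support, |M x x| = ∏ x ∈ g.support, |M x (g x)| := by
  obtain ⟨hc, hv, hW⟩ := h
  obtain ⟨x0, hx⟩ : ∃ x, x ∈ g.support := Finset.card_pos.mp (by
    have := hc.two_le_card_support; omega)
  have hscyc : IsSCyc M (dA g x0 (r := g.support.card)) (dA g x0) :=
    CS.1 _ _ _ (diag_IsCyc hc hv hd hx) (by rw [diag_parity hc hx]; exact hW)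
  unfold IsSCyc at hscyc
  have h1 := dA_prod hc hx (fun x => |M x x|)
  have h2 := dA_prod hc hx (fun x => |M x (g x)|)
  have h3 : ∏ t : Fin g.support.card, |M (dA g x0 t) (dA g x0 (finRotate _ t))|
      = ∏ t : Fin g.support.card, |M (dA g x0 t) (g (dA g x0 t))| :=
    Finset.prod_congr rfl (fun t _ => by rw [dA_rot hc hx])
  rw [← h1, ← h2, ← h3, hscyc]

lemma EC_sign_prod (hd : ∀ i, M i i ≠ 0) (h : EC M g) :
    (∏ x ∈ g.support, Real.sign (M x x)) * (∏ x ∈ g.support, Real.sign (M x (g x)))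
      = (-1 : ℝ) ^ g.support.card := by
  obtain ⟨hc, hv, hW⟩ := h
  rw [W_eq, Finset.prod_mul_distrib] at hW
  have hsq : ((-1 : ℝ) ^ g.support.card) * ((-1 : ℝ) ^ g.support.card) = 1 := by
    rw [← pow_add]
    exact Even.neg_one_pow ⟨g.support.card, rfl⟩
  calc (∏ x ∈ g.support, Real.sign (M x x)) * ∏ x ∈ g.support, Real.sign (M x (g x))
      = ((-1 : ℝ) ^ g.support.card) * (((-1 : ℝ) ^ g.support.card)
        * ((∏ x ∈ g.support, Real.sign (M x x))
          * ∏ x ∈ g.support, Real.sign (M x (g x)))) := by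
        rw [← mul_assoc, hsq, one_mul]
    _ = (-1 : ℝ) ^ g.support.card := by rw [hW, mul_one]

lemma KE (CS : ConditionStar M) (hd : ∀ i, M i i ≠ 0) (h : EC M g) :
    ∏ x ∈ g.support, M x (g x)
      = (-1 : ℝ) ^ g.support.card * ∏ x ∈ g.support, M x x := by
  have habs := EC_to_sCyc CS hd h
  have hsgn := EC_sign_prod hd h
  have harc : ∏ x ∈ g.support, M x (g x)
      = (∏ x ∈ g.support, Real.sign (M x (g x))) * ∏ x ∈ g.support, |M x (g x)| := by
    rw [← Finset.prod_mul_distrib]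
    exact Finset.prod_congr rfl (fun x _ => eq_sign_mul_abs _)
  have hdg : ∏ x ∈ g.support, M x x
      = (∏ x ∈ g.support, Real.sign (M x x)) * ∏ x ∈ g.support, |M x x| := by
    rw [← Finset.prod_mul_distrib]
    exact Finset.prod_congr rfl (fun x _ => eq_sign_mul_abs _)
  have hsd_sq : (∏ x ∈ g.support, Real.sign (M x x))
      * (∏ x ∈ g.support, Real.sign (M x x)) = 1 := by
    rw [← Finset.prod_mul_distrib]
    exact Finset.prod_eq_one (fun x _ => rsign_sq (hd x))
  have hsa : ∏ x ∈ g.support, Real.sign (M x (g x))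
      = (-1 : ℝ) ^ g.support.card * ∏ x ∈ g.support, Real.sign (M x x) := by
    calc ∏ x ∈ g.support, Real.sign (M x (g x))
        = ((∏ x ∈ g.support, Real.sign (M x x))
          * (∏ x ∈ g.support, Real.sign (M x x)))
          * ∏ x ∈ g.support, Real.sign (M x (g x)) := by rw [hsd_sq, one_mul]
      _ = (∏ x ∈ g.support, Real.sign (M x x))
          * ((∏ x ∈ g.support, Real.sign (M x x))
            * ∏ x ∈ g.support, Real.sign (M x (g x))) := by ring
      _ = (-1 : ℝ) ^ g.support.card * ∏ x ∈ g.support, Real.sign (M x x) := by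
          rw [hsgn]; ring
  rw [harc, hdg, hsa, habs]
  ring

end SSDProof
namespace SSDProof
open SRGraph Equiv Finset Function

variable {k : ℕ}

/-- sign weight of one vertex of a diagonal-type cycle -/
noncomputable def gW (M : Matrix (Fin k) (Fin k) ℝ) (g : Equiv.Perm (Fin k))
    (z : Fin k) : ℝ :=
  Real.sign (M z z) * Real.sign (M z (g z))

lemma W_eq' (M : Matrix (Fin k) (Fin k) ℝ) (g : Equiv.Perm (Fin k)) :
    W M g = (-1 : ℝ) ^ g.support.card * ∏ x ∈ g.support, gW M g x :=
  prod_neg g.support _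

/-- rows of the mixed cycle -/
def mA (c f : Equiv.Perm (Fin k)) (x0 : Fin k) (q s R1 : ℕ) {rE : ℕ} :
    Fin rE → Fin k :=
  fun t => if (t : ℕ) < R1 then (c ^ ((t : ℕ) + q)) x0 else (f ^ (s - 1 - ((t : ℕ) - R1))) x0

/-- shifted columns of the mixed cycle -/
def mD (c f : Equiv.Perm (Fin k)) (x0 : Fin k) (q s R1 : ℕ) {rE : ℕ} :
    Fin rE → Fin k :=
  fun t => if (t : ℕ) < R1 then (c ^ ((t : ℕ) + q + 1)) x0 else mA c f x0 q s R1 t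

/-- columns of the mixed cycle -/
def mB (c f : Equiv.Perm (Fin k)) (x0 : Fin k) (q s R1 : ℕ) {rE : ℕ} :
    Fin rE → Fin k :=
  fun t => mD c f x0 q s R1 ((finRotate rE).symm t)

variable {c f : Equiv.Perm (Fin k)} {x0 : Fin k} {q s R1 rE : ℕ}

lemma mA_lt {t : Fin rE} (ht : (t : ℕ) < R1) :
    mA c f x0 q s R1 t = (c ^ ((t : ℕ) + q)) x0 := if_pos ht

lemma mA_ge {t : Fin rE} (ht : R1 ≤ (t : ℕ)) :
    mA c f x0 q s R1 t = (f ^ (s - 1 - ((t : ℕ) - R1))) x0 := if_neg (by omega)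

lemma mD_lt {t : Fin rE} (ht : (t : ℕ) < R1) :
    mD c f x0 q s R1 t = (c ^ ((t : ℕ) + q + 1)) x0 := if_pos ht

lemma mD_ge {t : Fin rE} (ht : R1 ≤ (t : ℕ)) :
    mD c f x0 q s R1 t = mA c f x0 q s R1 t := if_neg (by omega)

lemma mB_rot (t : Fin rE) :
    mB c f x0 q s R1 (finRotate rE t) = mD c f x0 q s R1 t := by
  unfold mB
  rw [Equiv.symm_apply_apply]

lemma mB_eq (t : Fin rE) :
    mB c f x0 q s R1 t = mD c f x0 q s R1 ((finRotate rE).symm t) := rfl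

lemma symm_rot_val_pos (t : Fin rE) (ht : 1 ≤ (t : ℕ)) :
    (((finRotate rE).symm t : Fin rE) : ℕ) = (t : ℕ) - 1 := by
  rw [finRotate_symm_val]
  have h1 : (t : ℕ) + (rE - 1) = ((t : ℕ) - 1) + rE := by
    have := t.isLt; omega
  rw [h1, Nat.add_mod_right, Nat.mod_eq_of_lt (by have := t.isLt; omega)]

lemma symm_rot_val_zero (t : Fin rE) (ht : (t : ℕ) = 0) :
    (((finRotate rE).symm t : Fin rE) : ℕ) = rE - 1 := by
  rw [finRotate_symm_val, ht, zero_add, Nat.mod_eq_of_lt (by have := t.isLt; omega)]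

end SSDProof
namespace SSDProof
open SRGraph Equiv Finset Function

variable {k : ℕ} {M : Matrix (Fin k) (Fin k) ℝ}

theorem chain_contradiction
    (CS : ConditionStar M) (hd : ∀ i, M i i ≠ 0)
    {c f : Equiv.Perm (Fin k)} {x0 : Fin k} {q : ℕ}
    (hc : c.IsCycle) (hf : f.IsCycle) (vc : Vld M c) (vf : Vld M f)
    (hWc : W M c = 1)
    (hq : q < c.support.card)
    (hx0c : x0 ∈ c.support) (hx0f : x0 ∈ f.support)
    (hagree : ∀ a, a < q → f ((c^a) x0) = c ((c^a) x0))
    (hbr : f ((c^q) x0) ≠ c ((c^q) x0))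
    (hT : ∀ y, y ∈ c.support → y ∈ f.support → ∃ a, a ≤ q ∧ y = (c^a) x0) :
    False := by
  set r := c.support.card with hr
  set s := f.support.card with hs
  have hr2 : 2 ≤ r := hc.two_le_card_support
  have hs2 : 2 ≤ s := hf.two_le_card_support
  -- chain equalities
  have hzf : ∀ a, a ≤ q → (c^a) x0 = (f^a) x0 := by
    intro a
    induction a with
    | zero => intro _; rfl
    | succ a ih =>
      intro ha
      rw [pow_succ', pow_succ', Equiv.Perm.mul_apply, Equiv.Perm.mul_apply,
        ← ih (by omega), hagree a (by omega)]
  have hmemc : ∀ a : ℕ, (c^a) x0 ∈ c.support :=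
    fun a => Equiv.Perm.pow_apply_mem_support.mpr hx0c
  have hmemf : ∀ b : ℕ, (f^b) x0 ∈ f.support :=
    fun b => Equiv.Perm.pow_apply_mem_support.mpr hx0f
  have hchain_memf : ∀ a, a ≤ q → (c^a) x0 ∈ f.support := by
    intro a ha; rw [hzf a ha]; exact hmemf a
  have hqs : q < s := by
    by_contra hqs
    push_neg at hqs
    have h1 : (f^s) x0 = x0 := (pow_fix_iff hf hx0f s).mpr dvd_rfl
    have h2 : (c^s) x0 = (c^0) x0 := by
      rw [hzf s (by omega), h1]; rfl
    have := (cyc_pow_eq_iff hc hx0c s 0).mp h2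
    rw [Nat.mod_eq_of_lt (show s < r by omega), Nat.zero_mod] at this
    omega
  have hpowc : ∀ {a b : ℕ}, a < r → b < r → ((c^a) x0 = (c^b) x0 ↔ a = b) := by
    intro a b ha hb
    constructor
    · intro h
      have := (cyc_pow_eq_iff hc hx0c a b).mp h
      rwa [Nat.mod_eq_of_lt ha, Nat.mod_eq_of_lt hb] at this
    · intro h; rw [h]
  have hpowf : ∀ {a b : ℕ}, a < s → b < s → ((f^a) x0 = (f^b) x0 ↔ a = b) := by
    intro a b ha hb
    constructor
    · intro h
      have := (cyc_pow_eq_iff hf hx0f a b).mp h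
      rwa [Nat.mod_eq_of_lt ha, Nat.mod_eq_of_lt hb] at this
    · intro h; rw [h]
  have hcr : (c^r) x0 = x0 := (pow_fix_iff hc hx0c r).mpr dvd_rfl
  have hfs : (f^s) x0 = x0 := (pow_fix_iff hf hx0f s).mpr dvd_rfl
  -- points of the chain, in both supports
  have hchain_iff : ∀ y, (y ∈ c.support ∧ y ∈ f.support) ↔ ∃ a, a ≤ q ∧ y = (c^a) x0 := by
    intro y
    constructor
    · rintro ⟨h1, h2⟩; exact hT y h1 h2
    · rintro ⟨a, ha, rfl⟩
      exact ⟨hmemc a, hchain_memf a ha⟩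
  have hfc_notin : ∀ a, q < a → a < r → (c^a) x0 ∉ f.support := by
    intro a ha1 ha2 hmem
    obtain ⟨a', ha', heq⟩ := hT _ (hmemc a) hmem
    have := (hpowc ha2 (by omega)).mp heq
    omega
  have hcf_notin : ∀ b, q < b → b < s → (f^b) x0 ∉ c.support := by
    intro b hb1 hb2 hmem
    obtain ⟨a', ha', heq⟩ := hT _ hmem (hmemf b)
    rw [hzf a' ha'] at heq
    have := (hpowf hb2 (by omega)).mp heq
    omega
  -- exponent congruence helper
  have hexpc : ∀ (a b : ℕ), a = b → (c^a) x0 = (c^b) x0 := by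
    intro a b h; rw [h]
  have hexpf : ∀ (a b : ℕ), a = b → (f^a) x0 = (f^b) x0 := by
    intro a b h; rw [h]
  rcases W_pm hd vf with hWf | hWf
  · -- f is also an e-cycle; the two cycles intersect in the single chain
    -- the path along the chain
    have huinj : Injective (fun i : Fin (q+1) => (c^(q - (i:ℕ))) x0) := by
      intro i j h
      have := (hpowc (show q - (i:ℕ) < r by omega) (show q - (j:ℕ) < r by omega)).mp h
      have hi := i.isLt
      have hj := j.isLt
      exact Fin.ext (by omega)
    have hVset : dV c ∩ dV f
        = pathVerts (fun i : Fin (q+1) => (c^(q - (i:ℕ))) x0)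
            (fun i : Fin (q+1) => (c^(q - (i:ℕ))) x0) := by
      ext v
      constructor
      · rintro ⟨hv1, hv2⟩
        rcases hv1 with ⟨x, hx, rfl⟩ | ⟨x, hx, rfl⟩
        · have hxf : x ∈ f.support := by
            rcases hv2 with ⟨y, hy, hxy⟩ | ⟨y, hy, hxy⟩
            · cases hxy; simpa using hy
            · exact absurd hxy (by simp)
          obtain ⟨a, ha, rfl⟩ := hT x (by simpa using hx) hxf
          exact Or.inl ⟨⟨q - a, by omega⟩, congrArg Sum.inl (hexpc (q - (q - a)) a (by omega))⟩
        · have hxf : x ∈ f.support := by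
            rcases hv2 with ⟨y, hy, hxy⟩ | ⟨y, hy, hxy⟩
            · exact absurd hxy (by simp)
            · cases hxy; simpa using hy
          obtain ⟨a, ha, rfl⟩ := hT x (by simpa using hx) hxf
          exact Or.inr ⟨⟨q - a, by omega⟩, congrArg Sum.inr (hexpc (q - (q - a)) a (by omega))⟩
      · rintro (⟨i, rfl⟩ | ⟨i, rfl⟩)
        · exact ⟨Or.inl ⟨_, by simpa using hmemc (q - (i:ℕ)), rfl⟩,
            Or.inl ⟨_, by simpa using hchain_memf (q - (i:ℕ)) (by omega), rfl⟩⟩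
        · exact ⟨Or.inr ⟨_, by simpa using hmemc (q - (i:ℕ)), rfl⟩,
            Or.inr ⟨_, by simpa using hchain_memf (q - (i:ℕ)) (by omega), rfl⟩⟩
    have hEset : dE c ∩ dE f
        = pathEdges (fun i : Fin (q+1) => (c^(q - (i:ℕ))) x0)
            (fun i : Fin (q+1) => (c^(q - (i:ℕ))) x0) := by
      ext e
      constructor
      · rintro ⟨⟨hec, h2⟩, ⟨hef, h4⟩⟩
        obtain ⟨a, ha, he1⟩ := hT e.1 hec hef
        rcases h2 with h2 | h2
        · -- diagonal edge
          refine Or.inl ⟨⟨q - a, by omega⟩, ?_⟩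
          have : (c ^ (q - (q - a))) x0 = e.1 := by
            rw [hexpc (q - (q - a)) a (by omega)]; exact he1.symm
          rw [Prod.ext_iff]
          exact ⟨this.symm, by rw [h2]; exact this.symm⟩
        · -- off-diagonal edge : e.2 = c e.1, and it must also be an edge of f
          have h4' : e.2 = f e.1 := by
            rcases h4 with h4 | h4
            · exfalso
              rw [h2] at h4
              exact (Equiv.Perm.mem_support.mp hec) h4
            · exact h4
          have hcf : f e.1 = c e.1 := by rw [← h2, ← h4']
          have haq : a < q := by
            rcases Nat.lt_or_ge a q with h | h
            · exact h
            · exfalso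
              have : a = q := by omega
              subst this
              rw [he1] at hcf
              exact hbr hcf
          refine Or.inr ⟨⟨q - a - 1, by omega⟩, ?_⟩
          rw [Prod.ext_iff]
          constructor
          · show e.1 = (c ^ (q - ((⟨q - a - 1, by omega⟩ : Fin q).succ : ℕ))) x0
            rw [show ((( ⟨q - a - 1, by omega⟩ : Fin q).succ : ℕ)) = q - a - 1 + 1 from rfl]
            rw [hexpc (q - (q - a - 1 + 1)) a (by omega)]
            exact he1
          · show e.2 = (c ^ (q - ((⟨q - a - 1, by omega⟩ : Fin q).castSucc : ℕ))) x0
            rw [show ((( ⟨q - a - 1, by omega⟩ : Fin q).castSucc : ℕ)) = q - a - 1 from rfl]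
            rw [hexpc (q - (q - a - 1)) (a + 1) (by omega), h2, he1, pow_succ',
              Equiv.Perm.mul_apply]
      · rintro (⟨i, rfl⟩ | ⟨i, rfl⟩)
        · -- diagonal edge of the path
          refine ⟨⟨hmemc _, Or.inl rfl⟩, ⟨hchain_memf _ (by omega), Or.inl rfl⟩⟩
        · -- off edge of the path
          have hsucc : (i.succ : ℕ) = (i : ℕ) + 1 := rfl
          have hcs : (i.castSucc : ℕ) = (i : ℕ) := rfl
          have hilt : (i : ℕ) < q := i.isLt
          have key : (c ^ (q - (i.castSucc : ℕ))) x0 = c ((c ^ (q - (i.succ : ℕ))) x0) := by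
            rw [hsucc, hcs, ← Equiv.Perm.mul_apply, ← pow_succ']
            exact hexpc _ _ (by omega)
          have keyf : (c ^ (q - (i.castSucc : ℕ))) x0 = f ((c ^ (q - (i.succ : ℕ))) x0) := by
            rw [key, hsucc, hagree (q - ((i:ℕ) + 1)) (by omega)]
          exact ⟨⟨hmemc _, Or.inr key⟩, ⟨hchain_memf _ (by omega), Or.inr keyf⟩⟩
    -- apply condition (*)
    apply CS.2
    refine ⟨r, dA c x0, dA c x0, s, dA f x0, dA f x0,
      diag_IsCyc hc vc hd hx0c, by rw [diag_parity hc hx0c]; exact hWc,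
      diag_IsCyc hf vf hd hx0f, by rw [diag_parity hf hx0f]; exact hWf, ?_, ?_⟩
    · rw [diag_edges hc hx0c, diag_edges hf hx0f]
      intro heq
      have hin : ((c^q) x0, c ((c^q) x0)) ∈ dE c := ⟨hmemc q, Or.inr rfl⟩
      rw [heq] at hin
      obtain ⟨h1, h2 | h2⟩ := hin
      · exact (Equiv.Perm.mem_support.mp (hmemc q)) h2
      · exact hbr h2.symm
    · rw [diag_edges hc hx0c, diag_edges hf hx0f, diag_verts hc hx0c, diag_verts hf hx0f,
        hVset, hEset]
      exact path_SRI _ _ huinj huinj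
  ·
    -- f is an o-cycle; build the mixed e-cycle and apply condition (*)
    set R1 := r - q with hR1def
    set R2 := s - q - 1 with hR2def
    set rE := R1 + R2 with hrEdef
    have hR1 : 1 ≤ R1 := by omega
    have hrE2 : 2 ≤ rE := by
      rcases Nat.eq_zero_or_pos R2 with h0 | h0
      · by_contra hlt
        push_neg at hlt
        apply hbr
        have h1 : f ((c^q) x0) = (f^(q+1)) x0 := by
          rw [hzf q (le_refl q), ← Equiv.Perm.mul_apply, ← pow_succ']
        have h2 : c ((c^q) x0) = (c^(q+1)) x0 := by
          rw [← Equiv.Perm.mul_apply, ← pow_succ']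
        have hseq : q + 1 = s := by omega
        have hreq : q + 1 = r := by omega
        rw [h1, h2]
        calc (f ^ (q+1)) x0 = (f ^ s) x0 := hexpf _ _ hseq
          _ = x0 := hfs
          _ = (c ^ r) x0 := hcr.symm
          _ = (c ^ (q+1)) x0 := (hexpc _ _ hreq).symm
      · omega
    -- arc structure
    have hDc : ∀ t : Fin rE, (t:ℕ) < R1 →
        mD c f x0 q s R1 t = c (mA c f x0 q s R1 t) := by
      intro t ht
      rw [mD_lt ht, mA_lt ht, ← Equiv.Perm.mul_apply, ← pow_succ']
    have hBf : ∀ t : Fin rE, ((t:ℕ) = 0 ∨ R1 ≤ (t:ℕ)) →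
        mB c f x0 q s R1 t = f (mA c f x0 q s R1 t) := by
      intro t ht
      have htlt := t.isLt
      rw [mB_eq]
      rcases ht with ht | ht
      · have hsv := symm_rot_val_zero t ht
        rcases Nat.eq_zero_or_pos R2 with h0 | h0
        · have hlt : (((finRotate rE).symm t : Fin rE) : ℕ) < R1 := by omega
          rw [mD_lt hlt, hsv, mA_lt (show (t:ℕ) < R1 by omega), ht,
            hexpc (rE - 1 + q + 1) r (by omega), hcr,
            hexpc (0 + q) q (by omega), hzf q (le_refl q),
            ← Equiv.Perm.mul_apply, ← pow_succ',
            hexpf (q + 1) s (by omega), hfs]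
        · have hge : R1 ≤ (((finRotate rE).symm t : Fin rE) : ℕ) := by omega
          rw [mD_ge hge, mA_ge hge, hsv, mA_lt (show (t:ℕ) < R1 by omega), ht,
            hexpc (0 + q) q (by omega), hzf q (le_refl q),
            ← Equiv.Perm.mul_apply, ← pow_succ']
          exact hexpf _ _ (by omega)
      · have ht1 : 1 ≤ (t:ℕ) := by omega
        have hsv := symm_rot_val_pos t ht1
        rcases Nat.lt_or_ge ((t:ℕ)) (R1+1) with hteq | htgt
        · have htR1 : (t:ℕ) = R1 := by omega
          have hlt : (((finRotate rE).symm t : Fin rE) : ℕ) < R1 := by omega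
          rw [mD_lt hlt, hsv, mA_ge ht,
            hexpc ((t:ℕ) - 1 + q + 1) r (by omega), hcr,
            hexpf (s - 1 - ((t:ℕ) - R1)) (s-1) (by omega),
            ← Equiv.Perm.mul_apply, ← pow_succ',
            hexpf (s - 1 + 1) s (by omega), hfs]
        · have hge : R1 ≤ (((finRotate rE).symm t : Fin rE) : ℕ) := by omega
          rw [mD_ge hge, mA_ge hge, hsv, mA_ge ht,
            ← Equiv.Perm.mul_apply, ← pow_succ']
          exact hexpf _ _ (by omega)
    have hBdiag : ∀ t : Fin rE, 1 ≤ (t:ℕ) → (t:ℕ) < R1 →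
        mB c f x0 q s R1 t = mA c f x0 q s R1 t := by
      intro t h1 h2
      rw [mB_eq]
      have hsv := symm_rot_val_pos t h1
      have hlt : (((finRotate rE).symm t : Fin rE) : ℕ) < R1 := by omega
      rw [mD_lt hlt, hsv, mA_lt h2]
      exact hexpc _ _ (by omega)
    -- membership of rows
    have hAmemf : ∀ t : Fin rE, ((t:ℕ) = 0 ∨ R1 ≤ (t:ℕ)) →
        mA c f x0 q s R1 t ∈ f.support := by
      intro t ht
      rcases ht with ht | ht
      · rw [mA_lt (show (t:ℕ) < R1 by omega), ht]
        rw [hexpc (0 + q) q (by omega)]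
        exact hchain_memf q (le_refl q)
      · rw [mA_ge ht]
        exact hmemf _
    have hAmemc : ∀ t : Fin rE, (t:ℕ) < R1 → mA c f x0 q s R1 t ∈ c.support := by
      intro t ht
      rw [mA_lt ht]
      exact hmemc _
    -- injectivity
    have hAinj : Injective (mA c f x0 q s R1 (rE := rE)) := by
      intro t u h
      have htlt := t.isLt
      have hult := u.isLt
      by_cases ht : (t:ℕ) < R1 <;> by_cases hu : (u:ℕ) < R1
      · rw [mA_lt ht, mA_lt hu] at h
        have := (hpowc (by omega) (by omega)).mp h
        exact Fin.ext (by omega)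
      · exfalso
        rw [mA_lt ht, mA_ge (by omega)] at h
        have hmem : (f ^ (s - 1 - ((u:ℕ) - R1))) x0 ∈ c.support := by
          rw [← h]; exact hmemc _
        exact hcf_notin _ (by omega) (by omega) hmem
      · exfalso
        rw [mA_ge (by omega), mA_lt hu] at h
        have hmem : (f ^ (s - 1 - ((t:ℕ) - R1))) x0 ∈ c.support := by
          rw [h]; exact hmemc _
        exact hcf_notin _ (by omega) (by omega) hmem
      · rw [mA_ge (by omega), mA_ge (by omega)] at h
        have := (hpowf (by omega) (by omega)).mp h
        exact Fin.ext (by omega)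
    have hDinj : Injective (mD c f x0 q s R1 (rE := rE)) := by
      intro t u h
      have htlt := t.isLt
      have hult := u.isLt
      by_cases ht : (t:ℕ) < R1 <;> by_cases hu : (u:ℕ) < R1
      · rw [mD_lt ht, mD_lt hu] at h
        have hmod := (cyc_pow_eq_iff hc hx0c _ _).mp h
        apply Fin.ext
        rcases Nat.lt_or_ge ((t:ℕ)+q+1) r with h3 | h3 <;>
          rcases Nat.lt_or_ge ((u:ℕ)+q+1) r with h4 | h4
        · rw [Nat.mod_eq_of_lt h3, Nat.mod_eq_of_lt h4] at hmod; omega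
        · rw [Nat.mod_eq_of_lt h3, show (u:ℕ)+q+1 = r by omega, Nat.mod_self] at hmod; omega
        · rw [Nat.mod_eq_of_lt h4, show (t:ℕ)+q+1 = r by omega, Nat.mod_self] at hmod; omega
        · omega
      · exfalso
        rw [mD_lt ht, mD_ge (by omega), mA_ge (by omega)] at h
        have hmem : (f ^ (s - 1 - ((u:ℕ) - R1))) x0 ∈ c.support := by
          rw [← h]; exact hmemc _
        exact hcf_notin _ (by omega) (by omega) hmem
      · exfalso
        rw [mD_ge (by omega), mA_ge (by omega), mD_lt hu] at h
        have hmem : (f ^ (s - 1 - ((t:ℕ) - R1))) x0 ∈ c.support := by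
          rw [h]; exact hmemc _
        exact hcf_notin _ (by omega) (by omega) hmem
      · rw [mD_ge (by omega), mD_ge (by omega)] at h
        exact hAinj h
    have hBinj : Injective (mB c f x0 q s R1 (rE := rE)) :=
      fun a b h => (Equiv.injective _) (hDinj h)
    -- the mixed cycle is a cycle of G(M)
    have hIsCycE : IsCyc M (mA c f x0 q s R1 (rE := rE)) (mB c f x0 q s R1) := by
      refine ⟨hrE2, hAinj, hBinj, ?_, ?_⟩
      · intro t
        by_cases ht : 1 ≤ (t:ℕ) ∧ (t:ℕ) < R1
        · rw [hBdiag t ht.1 ht.2]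
          exact hd _
        · have ht' : (t:ℕ) = 0 ∨ R1 ≤ (t:ℕ) := by omega
          rw [hBf t ht']
          exact vf _ (hAmemf t ht')
      · intro t
        rw [mB_rot]
        by_cases ht : (t:ℕ) < R1
        · rw [hDc t ht]
          exact vc _ (hAmemc t ht)
        · rw [mD_ge (by omega)]
          exact hd _
    -- parity of the mixed cycle
    have hparE : parity M (mA c f x0 q s R1 (rE := rE)) (mB c f x0 q s R1) = 1 := by
      set FF : ℕ → ℝ := fun tn =>
        if tn = 0 then gW M c ((c^q) x0) * gW M f ((f^q) x0)
        else if tn < R1 then gW M c ((c^(tn+q)) x0)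
        else gW M f ((f^(s-1-(tn-R1))) x0) with hFFdef
      have hFF : ∀ t : Fin rE,
          Real.sign (M (mA c f x0 q s R1 t) (mB c f x0 q s R1 t))
            * Real.sign (M (mA c f x0 q s R1 t) (mB c f x0 q s R1 (finRotate rE t)))
          = FF (t:ℕ) := by
        intro t
        have htlt := t.isLt
        rw [mB_rot]
        by_cases ht0 : (t:ℕ) = 0
        · rw [hBf t (Or.inl ht0), hDc t (by omega), mA_lt (by omega), ht0,
            hexpc (0+q) q (by omega)]
          simp only [hFFdef, if_pos rfl]
          unfold gW
          rw [← hzf q (le_refl q)]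
          have hsq := rsign_sq (hd ((c^q) x0))
          set d := Real.sign (M ((c^q) x0) ((c^q) x0))
          set sc := Real.sign (M ((c^q) x0) (c ((c^q) x0)))
          set sf := Real.sign (M ((c^q) x0) (f ((c^q) x0)))
          linear_combination (-(sc * sf)) * hsq
        · by_cases htR : (t:ℕ) < R1
          · rw [hBdiag t (by omega) htR, hDc t htR, mA_lt htR]
            simp only [hFFdef, if_neg ht0, if_pos htR]
            rfl
          · rw [hBf t (Or.inr (by omega)), mD_ge (by omega), mA_ge (by omega)]
            simp only [hFFdef, if_neg ht0, if_neg htR]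
            unfold gW
            ring
      unfold parity
      rw [Finset.prod_congr rfl (fun t _ => hFF t),
        Fin.prod_univ_eq_prod_range FF rE]
      -- split the range product
      obtain ⟨n1, hn1⟩ : ∃ n1, R1 = n1 + 1 := ⟨R1 - 1, by omega⟩
      have hsplit : ∏ tn ∈ Finset.range rE, FF tn
          = (∏ tn ∈ Finset.range R1, FF tn) * ∏ u ∈ Finset.range R2, FF (R1 + u) := by
        rw [hrEdef]
        exact Finset.prod_range_add FF R1 R2
      have hsecond : ∏ u ∈ Finset.range R2, FF (R1 + u)
          = ∏ u ∈ Finset.range R2, gW M f ((f^(s-1-u)) x0) := by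
        refine Finset.prod_congr rfl (fun u hu => ?_)
        rw [Finset.mem_range] at hu
        simp only [hFFdef]
        rw [if_neg (by omega), if_neg (by omega)]
        have : s - 1 - (R1 + u - R1) = s - 1 - u := by omega
        rw [this]
      have hfirst : ∏ tn ∈ Finset.range R1, FF tn
          = (∏ tn ∈ Finset.range n1, FF (tn+1)) * FF 0 := by
        rw [hn1, Finset.prod_range_succ']
      have hFF0 : FF 0 = gW M c ((c^q) x0) * gW M f ((f^q) x0) := by
        simp only [hFFdef, if_pos rfl]
      have hFFsucc : ∏ tn ∈ Finset.range n1, FF (tn+1)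
          = ∏ tn ∈ Finset.range n1, gW M c ((c^(q+(tn+1))) x0) := by
        refine Finset.prod_congr rfl (fun tn htn => ?_)
        rw [Finset.mem_range] at htn
        simp only [hFFdef]
        rw [if_neg (by omega), if_pos (by omega)]
        exact congrArg (gW M c) (hexpc _ _ (by omega))
      -- support products
      have hWc' : ∏ x ∈ c.support, gW M c x = (-1:ℝ)^r := by
        have h := hWc
        rw [W_eq'] at h
        calc ∏ x ∈ c.support, gW M c x
            = (-1:ℝ)^r * ((-1:ℝ)^r * ∏ x ∈ c.support, gW M c x) := by
              rw [← mul_assoc, ← pow_add, Even.neg_one_pow ⟨r, rfl⟩, one_mul]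
          _ = (-1:ℝ)^r * 1 := by rw [h]
          _ = (-1:ℝ)^r := mul_one _
      have hWf' : ∏ x ∈ f.support, gW M f x = -(-1:ℝ)^s := by
        have h := hWf
        rw [W_eq'] at h
        calc ∏ x ∈ f.support, gW M f x
            = (-1:ℝ)^s * ((-1:ℝ)^s * ∏ x ∈ f.support, gW M f x) := by
              rw [← mul_assoc, ← pow_add, Even.neg_one_pow ⟨s, rfl⟩, one_mul]
          _ = (-1:ℝ)^s * (-1) := by rw [h]
          _ = -(-1:ℝ)^s := by ring
      have hc_enum : ∏ tn ∈ Finset.range r, gW M c ((c^tn) x0)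
          = ∏ x ∈ c.support, gW M c x := prod_pow_supp hc hx0c _
      have hf_enum : ∏ tn ∈ Finset.range s, gW M f ((f^tn) x0)
          = ∏ x ∈ f.support, gW M f x := prod_pow_supp hf hx0f _
      have hc_split : ∏ tn ∈ Finset.range r, gW M c ((c^tn) x0)
          = (∏ a ∈ Finset.range q, gW M c ((c^a) x0))
            * ∏ tn ∈ Finset.range R1, gW M c ((c^(q+tn)) x0) := by
        have h := Finset.prod_range_add (fun tn => gW M c ((c^tn) x0)) q R1
        rw [show q + R1 = r by omega] at h
        exact h
      have hf_split : ∏ tn ∈ Finset.range s, gW M f ((f^tn) x0)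
          = (∏ a ∈ Finset.range q, gW M f ((f^a) x0))
            * ∏ tn ∈ Finset.range (s-q), gW M f ((f^(q+tn)) x0) := by
        have h := Finset.prod_range_add (fun tn => gW M f ((f^tn) x0)) q (s-q)
        rw [show q + (s-q) = s by omega] at h
        exact h
      have hch_eq : ∏ a ∈ Finset.range q, gW M c ((c^a) x0)
          = ∏ a ∈ Finset.range q, gW M f ((f^a) x0) := by
        refine Finset.prod_congr rfl (fun a ha => ?_)
        rw [Finset.mem_range] at ha
        rw [← hzf a (by omega)]
        unfold gW
        rw [hagree a ha]
      have hch_sq : (∏ a ∈ Finset.range q, gW M c ((c^a) x0))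
          * (∏ a ∈ Finset.range q, gW M c ((c^a) x0)) = 1 := by
        rw [← Finset.prod_mul_distrib]
        apply Finset.prod_eq_one
        intro a _
        unfold gW
        have h1 := rsign_sq (hd ((c^a) x0))
        have h2 := rsign_sq (vc _ (hmemc a))
        calc Real.sign (M ((c^a) x0) ((c^a) x0)) * Real.sign (M ((c^a) x0) (c ((c^a) x0)))
              * (Real.sign (M ((c^a) x0) ((c^a) x0)) * Real.sign (M ((c^a) x0) (c ((c^a) x0))))
            = (Real.sign (M ((c^a) x0) ((c^a) x0)) * Real.sign (M ((c^a) x0) ((c^a) x0)))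
              * (Real.sign (M ((c^a) x0) (c ((c^a) x0)))
                * Real.sign (M ((c^a) x0) (c ((c^a) x0)))) := by ring
          _ = 1 := by rw [h1, h2, mul_one]
      -- the c-part product
      have hQc : (∏ tn ∈ Finset.range n1, FF (tn+1)) * FF 0
          = (∏ tn ∈ Finset.range R1, gW M c ((c^(q+tn)) x0)) * gW M f ((f^q) x0) := by
        rw [hFFsucc, hFF0, hn1, Finset.prod_range_succ']
        have : gW M c ((c^(q+0)) x0) = gW M c ((c^q) x0) :=
          congrArg (gW M c) (hexpc _ _ (by omega))
        rw [this]
        ring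
      -- the f-part product
      have hQf : gW M f ((f^q) x0) * ∏ u ∈ Finset.range R2, gW M f ((f^(s-1-u)) x0)
          = ∏ tn ∈ Finset.range (s-q), gW M f ((f^(q+tn)) x0) := by
        have hrefl := Finset.prod_range_reflect (fun j => gW M f ((f^(q+j)) x0)) (s-q)
        have hconv : ∏ j ∈ Finset.range (s-q), gW M f ((f^(q+(s-q-1-j))) x0)
            = ∏ j ∈ Finset.range (s-q), gW M f ((f^(s-1-j)) x0) := by
          refine Finset.prod_congr rfl (fun j hj => ?_)
          rw [Finset.mem_range] at hj
          exact congrArg (gW M f) (hexpf _ _ (by omega))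
        rw [hconv] at hrefl
        rw [← hrefl, show s - q = R2 + 1 by omega, Finset.prod_range_succ]
        have : gW M f ((f^(s-1-R2)) x0) = gW M f ((f^q) x0) :=
          congrArg (gW M f) (hexpf _ _ (by omega))
        rw [this]
        ring
      -- put everything together
      have htotal : ∏ tn ∈ Finset.range rE, FF tn = (-1:ℝ)^r * (-(-1:ℝ)^s) := by
        rw [hsplit, hsecond, hfirst, hQc]
        have hQcval : (∏ tn ∈ Finset.range R1, gW M c ((c^(q+tn)) x0))
            * (∏ a ∈ Finset.range q, gW M c ((c^a) x0)) = (-1:ℝ)^r := by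
          rw [mul_comm, ← hc_split, hc_enum, hWc']
        have hQfval : (∏ tn ∈ Finset.range (s-q), gW M f ((f^(q+tn)) x0))
            * (∏ a ∈ Finset.range q, gW M c ((c^a) x0)) = -(-1:ℝ)^s := by
          rw [hch_eq, mul_comm, ← hf_split, hf_enum, hWf']
        calc (∏ tn ∈ Finset.range R1, gW M c ((c^(q+tn)) x0)) * gW M f ((f^q) x0)
              * ∏ u ∈ Finset.range R2, gW M f ((f^(s-1-u)) x0)
            = (∏ tn ∈ Finset.range R1, gW M c ((c^(q+tn)) x0))
              * (gW M f ((f^q) x0) * ∏ u ∈ Finset.range R2, gW M f ((f^(s-1-u)) x0)) := by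
              ring
          _ = (∏ tn ∈ Finset.range R1, gW M c ((c^(q+tn)) x0))
              * ∏ tn ∈ Finset.range (s-q), gW M f ((f^(q+tn)) x0) := by rw [hQf]
          _ = ((∏ tn ∈ Finset.range R1, gW M c ((c^(q+tn)) x0))
                * (∏ a ∈ Finset.range q, gW M c ((c^a) x0)))
              * ((∏ tn ∈ Finset.range (s-q), gW M f ((f^(q+tn)) x0))
                * (∏ a ∈ Finset.range q, gW M c ((c^a) x0))) := by
              rw [show ∀ A B C : ℝ, C * C = 1 → A * B = A * C * (B * C) from
                fun A B C h => by
                  calc A * B = (A * B) * (C * C) := by rw [h, mul_one]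
                    _ = A * C * (B * C) := by ring]
              exact hch_sq
          _ = (-1:ℝ)^r * (-(-1:ℝ)^s) := by rw [hQcval, hQfval]
      rw [htotal]
      have hodd : Odd (rE + r + s) := by
        rw [Nat.odd_iff]
        omega
      have : ((-1:ℝ)^rE) * ((-1:ℝ)^r * (-(-1:ℝ)^s)) = -((-1:ℝ)^(rE + r + s)) := by
        rw [pow_add, pow_add]
        ring
      rw [this, Odd.neg_one_pow hodd]
      norm_num
    -- edge set of the mixed cycle
    have hEE : cycEdges (mA c f x0 q s R1 (rE := rE)) (mB c f x0 q s R1)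
        = {e : Fin k × Fin k |
            (∃ a, q ≤ a ∧ a < r ∧ e = ((c^a) x0, c ((c^a) x0)))
          ∨ (∃ b, q ≤ b ∧ b < s ∧ e = ((f^b) x0, f ((f^b) x0)))
          ∨ (∃ a, q < a ∧ a < r ∧ e = ((c^a) x0, (c^a) x0))
          ∨ (∃ b, q < b ∧ b < s ∧ e = ((f^b) x0, (f^b) x0))} := by
      ext e
      constructor
      · rintro ⟨t, rfl | rfl⟩
        · have htlt := t.isLt
          by_cases h1 : 1 ≤ (t:ℕ) ∧ (t:ℕ) < R1
          · refine Or.inr (Or.inr (Or.inl ⟨(t:ℕ)+q, by omega, by omega, ?_⟩))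
            rw [hBdiag t h1.1 h1.2, mA_lt h1.2]
          · have ht' : (t:ℕ) = 0 ∨ R1 ≤ (t:ℕ) := by omega
            rcases ht' with ht0 | htg
            · refine Or.inr (Or.inl ⟨q, le_refl q, by omega, ?_⟩)
              rw [hBf t (Or.inl ht0), mA_lt (show (t:ℕ) < R1 by omega), ht0,
                hexpc (0+q) q (by omega), hzf q (le_refl q)]
            · refine Or.inr (Or.inl ⟨s - 1 - ((t:ℕ) - R1), by omega, by omega, ?_⟩)
              rw [hBf t (Or.inr htg), mA_ge htg]
        · have htlt := t.isLt
          rw [mB_rot]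
          by_cases ht : (t:ℕ) < R1
          · refine Or.inl ⟨(t:ℕ)+q, by omega, by omega, ?_⟩
            rw [hDc t ht, mA_lt ht]
          · refine Or.inr (Or.inr (Or.inr ⟨s - 1 - ((t:ℕ) - R1), by omega, by omega, ?_⟩))
            rw [mD_ge (by omega), mA_ge (by omega)]
      · rintro (⟨a, ha1, ha2, rfl⟩ | ⟨b, hb1, hb2, rfl⟩ | ⟨a, ha1, ha2, rfl⟩ | ⟨b, hb1, hb2, rfl⟩)
        · refine ⟨⟨a - q, by omega⟩, Or.inr ?_⟩
          have hval : ((⟨a - q, by omega⟩ : Fin rE) : ℕ) = a - q := rfl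
          have hlt : ((⟨a - q, by omega⟩ : Fin rE) : ℕ) < R1 := by rw [hval]; omega
          rw [mB_rot, hDc _ hlt, mA_lt hlt, hval, hexpc (a - q + q) a (by omega)]
        · rcases Nat.eq_or_lt_of_le hb1 with hbq | hbgt
          · refine ⟨⟨0, by omega⟩, Or.inl ?_⟩
            have hval : ((⟨0, by omega⟩ : Fin rE) : ℕ) = 0 := rfl
            rw [hBf _ (Or.inl hval), mA_lt (show ((⟨0, by omega⟩ : Fin rE) : ℕ) < R1 by rw [hval]; omega),
              hval, hexpc (0+q) q (by omega), hzf q (le_refl q), hexpf q b hbq]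
          · refine ⟨⟨R1 + (s - 1 - b), by omega⟩, Or.inl ?_⟩
            have hval : ((⟨R1 + (s - 1 - b), by omega⟩ : Fin rE) : ℕ) = R1 + (s - 1 - b) := rfl
            have hge : R1 ≤ ((⟨R1 + (s - 1 - b), by omega⟩ : Fin rE) : ℕ) := by rw [hval]; omega
            rw [hBf _ (Or.inr hge), mA_ge hge, hval,
              hexpf (s - 1 - (R1 + (s - 1 - b) - R1)) b (by omega)]
        · refine ⟨⟨a - q, by omega⟩, Or.inl ?_⟩
          have hval : ((⟨a - q, by omega⟩ : Fin rE) : ℕ) = a - q := rfl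
          have h1' : 1 ≤ ((⟨a - q, by omega⟩ : Fin rE) : ℕ) := by rw [hval]; omega
          have h2' : ((⟨a - q, by omega⟩ : Fin rE) : ℕ) < R1 := by rw [hval]; omega
          rw [hBdiag _ h1' h2', mA_lt h2', hval, hexpc (a - q + q) a (by omega)]
        · refine ⟨⟨R1 + (s - 1 - b), by omega⟩, Or.inr ?_⟩
          have hval : ((⟨R1 + (s - 1 - b), by omega⟩ : Fin rE) : ℕ) = R1 + (s - 1 - b) := rfl
          have hge : R1 ≤ ((⟨R1 + (s - 1 - b), by omega⟩ : Fin rE) : ℕ) := by rw [hval]; omega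
          rw [mB_rot, mD_ge hge, mA_ge hge, hval,
            hexpf (s - 1 - (R1 + (s - 1 - b) - R1)) b (by omega)]
    -- vertex intersection is the complementary path
    have huw_inj1 : Injective (fun i : Fin (R1 - 1 + 1) => (c^((i:ℕ)+q)) x0) := by
      intro i j h
      have := (hpowc (show (i:ℕ)+q < r by have := i.isLt; omega)
        (show (j:ℕ)+q < r by have := j.isLt; omega)).mp h
      exact Fin.ext (by omega)
    have huw_inj2 : Injective (fun i : Fin (R1 - 1 + 1) => (c^((i:ℕ)+q+1)) x0) := by
      intro i j h
      have hi := i.isLt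
      have hj := j.isLt
      have hmod := (cyc_pow_eq_iff hc hx0c ((i:ℕ)+q+1) ((j:ℕ)+q+1)).mp h
      apply Fin.ext
      rcases Nat.lt_or_ge ((i:ℕ)+q+1) r with h3 | h3 <;>
        rcases Nat.lt_or_ge ((j:ℕ)+q+1) r with h4 | h4
      · rw [Nat.mod_eq_of_lt h3, Nat.mod_eq_of_lt h4] at hmod; omega
      · rw [Nat.mod_eq_of_lt h3, show (j:ℕ)+q+1 = r by omega, Nat.mod_self] at hmod; omega
      · rw [Nat.mod_eq_of_lt h4, show (i:ℕ)+q+1 = r by omega, Nat.mod_self] at hmod; omega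
      · omega
    have hVert : dV c ∩ cycVerts (mA c f x0 q s R1 (rE := rE)) (mB c f x0 q s R1)
        = pathVerts (fun i : Fin (R1 - 1 + 1) => (c^((i:ℕ)+q)) x0)
            (fun i : Fin (R1 - 1 + 1) => (c^((i:ℕ)+q+1)) x0) := by
      ext v
      constructor
      · rintro ⟨hv1, hv2⟩
        rcases hv1 with ⟨x, hx, rfl⟩ | ⟨x, hx, rfl⟩
        · obtain ⟨t, ht⟩ : ∃ t, mA c f x0 q s R1 (rE := rE) t = x := by
            rcases hv2 with ⟨t, ht⟩ | ⟨t, ht⟩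
            · exact ⟨t, Sum.inl.inj ht⟩
            · exact absurd ht (by simp)
          have htlt := t.isLt
          by_cases hlt : (t:ℕ) < R1
          · refine Or.inl ⟨⟨(t:ℕ), by omega⟩, ?_⟩
            show Sum.inl ((c ^ (((t:ℕ)) + q)) x0) = Sum.inl x
            rw [← mA_lt hlt, ht]
          · exfalso
            rw [mA_ge (by omega)] at ht
            apply hcf_notin (s - 1 - ((t:ℕ) - R1)) (by omega) (by omega)
            rw [ht]
            exact Finset.mem_coe.mp hx
        · obtain ⟨t, ht⟩ : ∃ t, mD c f x0 q s R1 (rE := rE) t = x := by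
            rcases hv2 with ⟨t, ht⟩ | ⟨t, ht⟩
            · exact absurd ht (by simp)
            · exact ⟨(finRotate rE).symm t, Sum.inr.inj ht⟩
          have htlt := t.isLt
          by_cases hlt : (t:ℕ) < R1
          · refine Or.inr ⟨⟨(t:ℕ), by omega⟩, ?_⟩
            show Sum.inr ((c ^ (((t:ℕ)) + q + 1)) x0) = Sum.inr x
            rw [← mD_lt hlt, ht]
          · exfalso
            rw [mD_ge (by omega), mA_ge (by omega)] at ht
            apply hcf_notin (s - 1 - ((t:ℕ) - R1)) (by omega) (by omega)
            rw [ht]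
            exact Finset.mem_coe.mp hx
      · rintro (⟨i, rfl⟩ | ⟨i, rfl⟩)
        · have hilt := i.isLt
          refine ⟨Or.inl ⟨_, Finset.mem_coe.mpr (hmemc ((i:ℕ)+q)), rfl⟩, ?_⟩
          refine Or.inl ⟨⟨(i:ℕ), by omega⟩, ?_⟩
          show Sum.inl (mA c f x0 q s R1 (⟨(i:ℕ), by omega⟩ : Fin rE)) = _
          rw [mA_lt (show ((⟨(i:ℕ), by omega⟩ : Fin rE) : ℕ) < R1 by
            show (i:ℕ) < R1; omega)]
          rfl
        · have hilt := i.isLt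
          refine ⟨Or.inr ⟨_, Finset.mem_coe.mpr (hmemc ((i:ℕ)+q+1)), rfl⟩, ?_⟩
          refine Or.inr ⟨finRotate rE (⟨(i:ℕ), by omega⟩ : Fin rE), ?_⟩
          show Sum.inr (mB c f x0 q s R1 (finRotate rE (⟨(i:ℕ), by omega⟩ : Fin rE))) = _
          rw [mB_rot, mD_lt (show ((⟨(i:ℕ), by omega⟩ : Fin rE) : ℕ) < R1 by
            show (i:ℕ) < R1; omega)]
          rfl
    have hEdge : dE c ∩ cycEdges (mA c f x0 q s R1 (rE := rE)) (mB c f x0 q s R1)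
        = pathEdges (fun i : Fin (R1 - 1 + 1) => (c^((i:ℕ)+q)) x0)
            (fun i : Fin (R1 - 1 + 1) => (c^((i:ℕ)+q+1)) x0) := by
      rw [hEE]
      ext e
      constructor
      · rintro ⟨⟨hec, hor⟩, hee⟩
        rcases hee with ⟨a, ha1, ha2, rfl⟩ | ⟨b, hb1, hb2, rfl⟩ | ⟨a, ha1, ha2, rfl⟩
          | ⟨b, hb1, hb2, rfl⟩
        · refine Or.inl ⟨⟨a - q, by omega⟩, ?_⟩
          rw [Prod.ext_iff]
          constructor
          · show (c^a) x0 = (c ^ ((a - q) + q)) x0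
            exact hexpc _ _ (by omega)
          · show c ((c^a) x0) = (c ^ ((a - q) + q + 1)) x0
            rw [← Equiv.Perm.mul_apply, ← pow_succ']
            exact hexpc _ _ (by omega)
        · exfalso
          simp only at hec
          rcases Nat.eq_or_lt_of_le hb1 with hbq | hbgt
          · rcases hor with hor | hor
            · simp only at hor
              exact (Equiv.Perm.mem_support.mp (hmemf b)) hor
            · simp only at hor
              apply hbr
              rw [hzf q (le_refl q), hbq]
              exact hor
          · exact hcf_notin b hbgt hb2 hec
        · refine Or.inr ⟨⟨a - q - 1, by omega⟩, ?_⟩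
          rw [Prod.ext_iff]
          constructor
          · show (c^a) x0 = (c ^ (((a - q - 1) + 1) + q)) x0
            exact hexpc _ _ (by omega)
          · show (c^a) x0 = (c ^ ((a - q - 1) + q + 1)) x0
            exact hexpc _ _ (by omega)
        · exfalso
          simp only at hec
          exact hcf_notin b hb1 hb2 hec
      · rintro (⟨i, rfl⟩ | ⟨i, rfl⟩)
        · have hilt := i.isLt
          constructor
          · refine ⟨hmemc _, Or.inr ?_⟩
            show (c ^ ((i:ℕ) + q + 1)) x0 = c ((c ^ ((i:ℕ) + q)) x0)
            rw [← Equiv.Perm.mul_apply, ← pow_succ']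
          · refine Or.inl ⟨(i:ℕ) + q, by omega, by omega, ?_⟩
            rw [Prod.ext_iff]
            refine ⟨rfl, ?_⟩
            show (c ^ ((i:ℕ) + q + 1)) x0 = c ((c ^ ((i:ℕ) + q)) x0)
            rw [← Equiv.Perm.mul_apply, ← pow_succ']
        · have hilt := i.isLt
          have hs1 : ((i.succ : Fin (R1 - 1 + 1)) : ℕ) = (i:ℕ) + 1 := rfl
          have hs2 : ((i.castSucc : Fin (R1 - 1 + 1)) : ℕ) = (i:ℕ) := rfl
          constructor
          · refine ⟨hmemc _, Or.inl ?_⟩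
            show (c ^ ((i.castSucc:ℕ) + q + 1)) x0 = (c ^ ((i.succ:ℕ) + q)) x0
            rw [hs1, hs2]
            exact hexpc _ _ (by omega)
          · refine Or.inr (Or.inr (Or.inl ⟨(i:ℕ) + q + 1, by omega, by omega, ?_⟩))
            rw [Prod.ext_iff]
            constructor
            · show (c ^ ((i.succ:ℕ) + q)) x0 = (c ^ ((i:ℕ) + q + 1)) x0
              rw [hs1]
              exact hexpc _ _ (by omega)
            · show (c ^ ((i.castSucc:ℕ) + q + 1)) x0 = (c ^ ((i:ℕ) + q + 1)) x0
              rw [hs2]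
    -- the two edge sets differ
    have hne : dE c ≠ cycEdges (mA c f x0 q s R1 (rE := rE)) (mB c f x0 q s R1) := by
      intro heq
      have hin : ((c^q) x0, (c^q) x0) ∈ dE c := ⟨hmemc q, Or.inl rfl⟩
      rw [heq, hEE] at hin
      rcases hin with ⟨a, ha1, ha2, he⟩ | ⟨b, hb1, hb2, he⟩ | ⟨a, ha1, ha2, he⟩
        | ⟨b, hb1, hb2, he⟩
      · rw [Prod.ext_iff] at he
        have h1 : (c^q) x0 = (c^a) x0 := he.1
        have h2 : (c^q) x0 = c ((c^a) x0) := he.2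
        rw [← h1] at h2
        exact (Equiv.Perm.mem_support.mp (hmemc q)) h2.symm
      · rw [Prod.ext_iff] at he
        have h1 : (c^q) x0 = (f^b) x0 := he.1
        have h2 : (c^q) x0 = f ((f^b) x0) := he.2
        rw [← h1] at h2
        have : (c^q) x0 ∈ f.support := hchain_memf q (le_refl q)
        exact (Equiv.Perm.mem_support.mp this) h2.symm
      · rw [Prod.ext_iff] at he
        have h1 : (c^q) x0 = (c^a) x0 := he.1
        have := (hpowc (show q < r by omega) (show a < r by omega)).mp h1
        omega
      · rw [Prod.ext_iff] at he
        have h1 : (c^q) x0 = (f^b) x0 := he.1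
        rw [hzf q (le_refl q)] at h1
        have := (hpowf (show q < s by omega) (show b < s by omega)).mp h1
        omega
    -- apply condition (*)
    apply CS.2
    refine ⟨r, dA c x0, dA c x0, rE, mA c f x0 q s R1, mB c f x0 q s R1,
      diag_IsCyc hc vc hd hx0c, by rw [diag_parity hc hx0c]; exact hWc,
      hIsCycE, hparE, ?_, ?_⟩
    · rw [diag_edges hc hx0c]
      exact hne
    · rw [diag_edges hc hx0c, diag_verts hc hx0c, hVert, hEdge]
      exact path_SRI _ _ huw_inj1 huw_inj2


end SSDProof
namespace SSDProof
open SRGraph Equiv Finset Function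

variable {k : ℕ} {M : Matrix (Fin k) (Fin k) ℝ}

theorem ec_disjoint (CS : ConditionStar M) (hd : ∀ i, M i i ≠ 0)
    {c g : Equiv.Perm (Fin k)} (hEC : EC M c) (hgcyc : g.IsCycle) (hgv : Vld M g)
    (hgne : g ≠ c) : Disjoint c.support g.support := by
  classical
  obtain ⟨hccyc, hcv, hWc⟩ := hEC
  by_contra hnd
  set r := c.support.card with hrdef
  have hr2 : 2 ≤ r := hccyc.two_le_card_support
  set sg := g.support.card with hsgdef
  have hsg2 : 2 ≤ sg := hgcyc.two_le_card_support
  -- find a branch point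
  have hx1 : ∃ x, x ∈ c.support ∧ x ∈ g.support ∧ c x ≠ g x := by
    by_contra hno
    push_neg at hno
    apply hgne
    obtain ⟨x0, hx0c', hx0g'⟩ := Finset.not_disjoint_iff.mp hnd
    have hcl : ∀ t : ℕ, (c^t) x0 ∈ c.support ∧ (c^t) x0 ∈ g.support := by
      intro t
      induction t with
      | zero =>
        refine ⟨?_, ?_⟩ <;> simp only [pow_zero, Equiv.Perm.one_apply] <;> assumption
      | succ t ih =>
        have h1 : (c^(t+1)) x0 = c ((c^t) x0) := by
          rw [pow_succ', Equiv.Perm.mul_apply]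
        constructor
        · rw [h1]; exact Equiv.Perm.apply_mem_support.mpr ih.1
        · rw [h1, hno _ ih.1 ih.2]; exact Equiv.Perm.apply_mem_support.mpr ih.2
    have hclg : ∀ t : ℕ, (g^t) x0 ∈ c.support ∧ (g^t) x0 ∈ g.support := by
      intro t
      induction t with
      | zero =>
        refine ⟨?_, ?_⟩ <;> simp only [pow_zero, Equiv.Perm.one_apply] <;> assumption
      | succ t ih =>
        have h1 : (g^(t+1)) x0 = g ((g^t) x0) := by
          rw [pow_succ', Equiv.Perm.mul_apply]
        constructor
        · rw [h1, ← hno _ ih.1 ih.2]; exact Equiv.Perm.apply_mem_support.mpr ih.1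
        · rw [h1]; exact Equiv.Perm.apply_mem_support.mpr ih.2
    have hsubc : c.support ⊆ g.support := by
      intro z hz
      obtain ⟨t, _, rfl⟩ := (mem_support_iff_pow hccyc hx0c' z).mp hz
      exact (hcl t).2
    have hsubg : g.support ⊆ c.support := by
      intro z hz
      obtain ⟨t, _, rfl⟩ := (mem_support_iff_pow hgcyc hx0g' z).mp hz
      exact (hclg t).1
    apply Equiv.ext
    intro z
    by_cases hz : z ∈ c.support
    · exact (hno z hz (hsubc hz)).symm
    · have h1 : c z = z := Equiv.Perm.notMem_support.mp hz
      have h2 : g z = z := Equiv.Perm.notMem_support.mp (fun hzz => hz (hsubg hzz))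
      rw [h1, h2]
  obtain ⟨x1, hx1c, hx1g, hx1ne⟩ := hx1
  -- first return of the g-orbit to the support of c
  have hPex : ∃ a, 1 ≤ a ∧ (g^a) x1 ∈ c.support := by
    refine ⟨sg, by omega, ?_⟩
    rw [(pow_fix_iff hgcyc hx1g sg).mpr dvd_rfl]
    exact hx1c
  set j := Nat.find hPex with hjdef
  obtain ⟨hj1, hjmem⟩ := Nat.find_spec hPex
  have hjle : j ≤ sg := Nat.find_le ⟨by omega, by
    rw [(pow_fix_iff hgcyc hx1g sg).mpr dvd_rfl]; exact hx1c⟩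
  have hjmin : ∀ a, 1 ≤ a → a < j → (g^a) x1 ∉ c.support := by
    intro a ha1 ha2 hmem
    exact (Nat.find_min hPex ha2) ⟨ha1, hmem⟩
  by_cases hyx : (g^j) x1 = x1
  · -- the supports meet only at x1 : chain of length 0
    have hjeq : j = sg := by
      have hdvd := (pow_fix_iff hgcyc hx1g j).mp hyx
      rw [← hsgdef] at hdvd
      have := Nat.le_of_dvd (by omega) hdvd
      omega
    have hT : ∀ z, z ∈ c.support → z ∈ g.support → ∃ a, a ≤ 0 ∧ z = (c^a) x1 := by
      intro z hzc hzg
      obtain ⟨t, ht, rfl⟩ := (mem_support_iff_pow hgcyc hx1g z).mp hzg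
      rcases Nat.eq_zero_or_pos t with rfl | htpos
      · exact ⟨0, le_refl 0, by simp⟩
      · exfalso
        exact hjmin t (by omega) (by omega) hzc
    exact chain_contradiction CS hd hccyc hgcyc hcv hgv hWc (show 0 < r by omega)
      hx1c hx1g (fun a ha => absurd ha (by omega))
      (by simpa using fun h => hx1ne h.symm) hT
  · -- genuine hybrid cycle
    set y := (g^j) x1 with hydef
    have hyc : y ∈ c.support := hjmem
    have hQex : ∃ b, 1 ≤ b ∧ (c^b) y = x1 := by
      obtain ⟨t, htr, hty⟩ := (mem_support_iff_pow hccyc hyc x1).mp hx1c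
      refine ⟨t, ?_, hty⟩
      rcases Nat.eq_zero_or_pos t with rfl | h
      · exfalso
        apply hyx
        have h00 : (c^0) y = y := by simp
        rw [h00] at hty
        exact hty
      · omega
    set i := Nat.find hQex with hidef
    obtain ⟨hi1, hQi⟩ := Nat.find_spec hQex
    have hilt : i < r := by
      obtain ⟨t, htr, hty⟩ := (mem_support_iff_pow hccyc hyc x1).mp hx1c
      have ht1 : 1 ≤ t := by
        rcases Nat.eq_zero_or_pos t with rfl | h
        · exfalso
          apply hyx
          have h00 : (c^0) y = y := by simp
          rw [h00] at hty
          exact hty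
        · omega
      have hile : i ≤ t := Nat.find_le ⟨ht1, hty⟩
      omega
    have himin : ∀ b, 1 ≤ b → b < i → (c^b) y ≠ x1 := by
      intro b hb1 hb2 hmem
      exact (Nat.find_min hQex hb2) ⟨hb1, hmem⟩
    -- the hybrid list
    set hl : List (Fin k) :=
      ((List.range j).map fun a => (g^a) x1) ++ ((List.range i).map fun b => (c^b) y)
      with hhl
    have hlen : hl.length = j + i := by simp [hhl]
    have hjlen : ((List.range j).map fun a => (g^a) x1).length = j := by simp
    have hget1 : ∀ (a : ℕ) (ha : a < j), hl[a]'(by omega) = (g^a) x1 := by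
      intro a ha
      have hb : a < ((List.range j).map fun a => (g^a) x1).length := by simpa using ha
      simp only [hhl]
      simp [List.getElem_append_left hb]
    have hget2 : ∀ (b : ℕ) (hb : b < i), hl[j+b]'(by omega) = (c^b) y := by
      intro b hb
      have hble : ((List.range j).map fun a => (g^a) x1).length ≤ j + b := by
        simpa using Nat.le_add_right j b
      simp only [hhl]
      simp [List.getElem_append_right hble]
    have hnodup : hl.Nodup := by
      rw [hhl]
      apply List.Nodup.append
      · rw [List.nodup_map_iff_inj_on (List.nodup_range (n := j))]
        intro a ha b hb hab
        rw [List.mem_range] at ha hb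
        have := (cyc_pow_eq_iff hgcyc hx1g a b).mp hab
        rw [Nat.mod_eq_of_lt (by omega), Nat.mod_eq_of_lt (by omega)] at this
        exact this
      · rw [List.nodup_map_iff_inj_on (List.nodup_range (n := i))]
        intro a ha b hb hab
        rw [List.mem_range] at ha hb
        have := (cyc_pow_eq_iff hccyc hyc a b).mp hab
        rw [Nat.mod_eq_of_lt (by omega), Nat.mod_eq_of_lt (by omega)] at this
        exact this
      · intro z hz1 hz2
        rw [List.mem_map] at hz1 hz2
        obtain ⟨a, ha, rfl⟩ := hz1
        obtain ⟨b, hb, hba⟩ := hz2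
        rw [List.mem_range] at ha hb
        rcases Nat.eq_zero_or_pos a with rfl | hapos
        · -- (g^0) x1 = x1 = (c^b) y
          rcases Nat.eq_zero_or_pos b with rfl | hbpos
          · apply hyx
            have : (c^0) y = (g^0) x1 := hba
            simpa using this
          · apply himin b (by omega) hb
            rw [hba]
            simp
        · apply hjmin a (by omega) ha
          rw [← hba]
          exact Equiv.Perm.pow_apply_mem_support.mpr hyc
    have hlen2 : 2 ≤ hl.length := by omega
    set h := hl.formPerm with hhdef
    have hhcyc : h.IsCycle := List.isCycle_formPerm hnodup hlen2
    have hhsupp : h.support = hl.toFinset :=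
      List.support_formPerm_of_nodup hl hnodup (by
        intro x hx
        have := congrArg List.length hx
        simp at this
        omega)
    have happly : ∀ (tn : ℕ) (htn : tn < j + i),
        h (hl[tn]'(by omega)) = hl[(tn+1) % (j+i)]'(by
          have := Nat.mod_lt (tn+1) (show 0 < j + i by omega)
          omega) := by
      intro tn htn
      have := List.formPerm_apply_getElem hl hnodup tn (by omega)
      rw [← hhdef] at this
      convert this using 2 <;> rw [hlen]
    have hstepg : ∀ a, a < j → h ((g^a) x1) = (g^(a+1)) x1 := by
      intro a ha
      rw [← hget1 a ha, happly a (by omega)]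
      rcases Nat.lt_or_ge (a+1) j with h1 | h1
      · have hmod : (a+1) % (j+i) = a + 1 := Nat.mod_eq_of_lt (by omega)
        simp only [hmod]
        exact hget1 (a+1) h1
      · have haj : a + 1 = j := by omega
        have hmod : (a+1) % (j+i) = j + 0 :=
          (Nat.mod_eq_of_lt (by omega)).trans (by omega)
        simp only [hmod]
        rw [hget2 0 (by omega), haj]
        simpa using hydef.symm
    have hstepc : ∀ b, b < i → h ((c^b) y) = (c^(b+1)) y := by
      intro b hb
      rw [← hget2 b hb, happly (j+b) (by omega)]
      rcases Nat.lt_or_ge (b+1) i with h1 | h1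
      · have hmod : (j+b+1) % (j+i) = j + (b+1) :=
          (Nat.mod_eq_of_lt (by omega)).trans (by omega)
        simp only [hmod]
        exact hget2 (b+1) h1
      · have hbi : b + 1 = i := by omega
        have hmod : (j+b+1) % (j+i) = 0 := by
          rw [show j+b+1 = j+i by omega]
          exact Nat.mod_self _
        simp only [hmod]
        rw [hget1 0 (by omega), hbi]
        simpa using hQi.symm
    have hmem_hl : ∀ z, z ∈ hl ↔
        ((∃ a, a < j ∧ (g^a) x1 = z) ∨ (∃ b, b < i ∧ (c^b) y = z)) := by
      intro z
      simp [hhl, List.mem_append, List.mem_map, List.mem_range]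
    have hVldh : Vld M h := by
      intro z hz
      rw [hhsupp, List.mem_toFinset, hmem_hl] at hz
      rcases hz with ⟨a, ha, rfl⟩ | ⟨b, hb, rfl⟩
      · have hga : h ((g^a) x1) = g ((g^a) x1) := by
          rw [hstepg a ha, pow_succ', Equiv.Perm.mul_apply]
        rw [hga]
        exact hgv _ (Equiv.Perm.pow_apply_mem_support.mpr hx1g)
      · have hcb : h ((c^b) y) = c ((c^b) y) := by
          rw [hstepc b hb, pow_succ', Equiv.Perm.mul_apply]
        rw [hcb]
        exact hcv _ (Equiv.Perm.pow_apply_mem_support.mpr hyc)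
    have hyf : y ∈ h.support := by
      rw [hhsupp, List.mem_toFinset, hmem_hl]
      exact Or.inr ⟨0, by omega, by simp⟩
    have hagree : ∀ b, b < i → h ((c^b) y) = c ((c^b) y) := by
      intro b hb
      rw [hstepc b hb, pow_succ', Equiv.Perm.mul_apply]
    have hbr : h ((c^i) y) ≠ c ((c^i) y) := by
      rw [hQi]
      have h0 : h x1 = g x1 := by
        have := hstepg 0 (by omega)
        simpa using this
      rw [h0]
      exact fun hgc => hx1ne (hgc.symm)
    have hT : ∀ z, z ∈ c.support → z ∈ h.support → ∃ b, b ≤ i ∧ z = (c^b) y := by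
      intro z hzc hzh
      rw [hhsupp, List.mem_toFinset, hmem_hl] at hzh
      rcases hzh with ⟨a, ha, rfl⟩ | ⟨b, hb, rfl⟩
      · rcases Nat.eq_zero_or_pos a with rfl | hapos
        · refine ⟨i, le_refl i, ?_⟩
          rw [hQi]
          simp
        · exact absurd hzc (hjmin a (by omega) ha)
      · exact ⟨b, by omega, rfl⟩
    exact chain_contradiction CS hd hccyc hhcyc hcv hVldh hWc hilt hyc hyf hagree hbr hT

end SSDProof
namespace SSDProof
open SRGraph Equiv Finset Function

variable {k : ℕ} {M : Matrix (Fin k) (Fin k) ℝ}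

lemma det_eq_sum (B : Matrix (Fin k) (Fin k) ℝ) :
    B.det = ∑ σ : Equiv.Perm (Fin k),
      ((Equiv.Perm.sign σ : ℤ) : ℝ) * ∏ i, B i (σ i) := by
  rw [← Matrix.det_transpose, Matrix.det_apply]
  refine Finset.sum_congr rfl (fun σ _ => ?_)
  rw [Units.smul_def, zsmul_eq_mul]
  congr 1

lemma sign_cast_sq (τ : Equiv.Perm (Fin k)) :
    ((Equiv.Perm.sign τ : ℤ) : ℝ) * ((Equiv.Perm.sign τ : ℤ) : ℝ) = 1 := by
  rcases Int.units_eq_one_or (Equiv.Perm.sign τ) with h | h <;> rw [h] <;> norm_num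

lemma sign_cast_cycle {g : Equiv.Perm (Fin k)} (hg : g.IsCycle) :
    ((Equiv.Perm.sign g : ℤ) : ℝ) = -(-1:ℝ)^g.support.card := by
  rw [hg.sign]
  push_cast
  ring

lemma ec_dichotomy (CS : ConditionStar M) (hd : ∀ i, M i i ≠ 0)
    {c0 : Equiv.Perm (Fin k)} (hEC : EC M c0) {σ : Equiv.Perm (Fin k)}
    (hσ : ∀ i, M i (σ i) ≠ 0) :
    (∀ x ∈ c0.support, σ x = c0 x) ∨ (∀ x ∈ c0.support, σ x = x) := by
  classical
  by_cases hex : ∃ x ∈ c0.support, σ x ≠ x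
  · left
    obtain ⟨x, hx, hσx⟩ := hex
    have hgc := Equiv.Perm.isCycle_cycleOf σ hσx
    have hgv : Vld M (σ.cycleOf x) := by
      intro z hz
      rw [Equiv.Perm.mem_support_cycleOf_iff] at hz
      rw [Equiv.Perm.cycleOf_apply, if_pos hz.1]
      exact hσ z
    have heq : σ.cycleOf x = c0 := by
      by_contra hne
      have hdisj := ec_disjoint CS hd hEC hgc hgv hne
      rw [Finset.disjoint_left] at hdisj
      refine hdisj hx ?_
      rw [Equiv.Perm.mem_support_cycleOf_iff]
      exact ⟨Equiv.Perm.SameCycle.refl σ x, Equiv.Perm.mem_support.mpr hσx⟩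
    intro z hz
    rw [← heq] at hz
    rw [Equiv.Perm.mem_support_cycleOf_iff] at hz
    rw [← heq, Equiv.Perm.cycleOf_apply, if_pos hz.1]
  · right
    push_neg at hex
    exact hex

lemma term_flip (CS : ConditionStar M) (hd : ∀ i, M i i ≠ 0)
    {c0 σ : Equiv.Perm (Fin k)} (hEC : EC M c0)
    (hfix : ∀ x ∈ c0.support, σ x = x) :
    ((Equiv.Perm.sign (σ * c0) : ℤ) : ℝ) * ∏ i, M i ((σ * c0) i)
      = -(((Equiv.Perm.sign σ : ℤ) : ℝ) * ∏ i, M i (σ i)) := by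
  obtain ⟨hccyc, hcv, hWc⟩ := hEC
  have hval1 : ∀ i ∈ c0.support, (σ * c0) i = c0 i := fun i hi => by
    rw [Equiv.Perm.mul_apply, hfix _ (Equiv.Perm.apply_mem_support.mpr hi)]
  have hval2 : ∀ i ∈ c0.supportᶜ, (σ * c0) i = σ i := fun i hi => by
    rw [Equiv.Perm.mul_apply,
      Equiv.Perm.notMem_support.mp (Finset.mem_compl.mp hi)]
  have hsplit1 : ∏ i, M i ((σ * c0) i)
      = (∏ i ∈ c0.support, M i (c0 i)) * ∏ i ∈ c0.supportᶜ, M i (σ i) := by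
    rw [← Finset.prod_mul_prod_compl c0.support]
    congr 1
    · exact Finset.prod_congr rfl (fun i hi => by rw [hval1 i hi])
    · exact Finset.prod_congr rfl (fun i hi => by rw [hval2 i hi])
  have hsplit2 : ∏ i, M i (σ i)
      = (∏ i ∈ c0.support, M i i) * ∏ i ∈ c0.supportᶜ, M i (σ i) := by
    rw [← Finset.prod_mul_prod_compl c0.support]
    congr 1
    exact Finset.prod_congr rfl (fun i hi => by rw [hfix i hi])
  have hKE := KE CS hd ⟨hccyc, hcv, hWc⟩
  have hsign : ((Equiv.Perm.sign (σ * c0) : ℤ) : ℝ)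
      = ((Equiv.Perm.sign σ : ℤ) : ℝ) * (-(-1:ℝ)^c0.support.card) := by
    rw [map_mul, Units.val_mul, Int.cast_mul, sign_cast_cycle hccyc]
  have hKK : (-1:ℝ)^c0.support.card * (-1:ℝ)^c0.support.card = 1 := by
    rw [← pow_add]
    exact Even.neg_one_pow ⟨c0.support.card, rfl⟩
  rw [hsplit1, hsplit2, hsign, hKE]
  set u := ((Equiv.Perm.sign σ : ℤ) : ℝ)
  set K := (-1:ℝ)^c0.support.card
  set P := ∏ i ∈ c0.support, M i i
  set Q := ∏ i ∈ c0.supportᶜ, M i (σ i)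
  linear_combination (-(u * P * Q)) * hKK

theorem Mmain (CS : ConditionStar M) (hd : ∀ i, M i i ≠ 0) :
    (∀ B : Matrix (Fin k) (Fin k) ℝ, SameSignPattern B M → B.det ≠ 0) ∨ M.det = 0 := by
  classical
  by_cases hex : ∃ c0, EC M c0
  · right
    obtain ⟨c0, hEC⟩ := hex
    have hc0card := hEC.1.two_le_card_support
    obtain ⟨x₀, hx₀⟩ : ∃ x, x ∈ c0.support :=
      Finset.card_pos.mp (by omega)
    rw [det_eq_sum]
    set F : Equiv.Perm (Fin k) → ℝ :=
      fun σ => ((Equiv.Perm.sign σ : ℤ) : ℝ) * ∏ i, M i (σ i) with hF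
    set ι : Equiv.Perm (Fin k) → Equiv.Perm (Fin k) :=
      fun σ => if (∀ i, M i (σ i) ≠ 0)
        then (if ∀ x ∈ c0.support, σ x = c0 x then σ * c0⁻¹ else σ * c0)
        else σ with hι
    -- helper facts
    have hFzero : ∀ σ : Equiv.Perm (Fin k), ¬(∀ i, M i (σ i) ≠ 0) → F σ = 0 := by
      intro σ hσ
      push_neg at hσ
      obtain ⟨i, hi⟩ := hσ
      show ((Equiv.Perm.sign σ : ℤ) : ℝ) * ∏ j, M j (σ j) = 0
      rw [Finset.prod_eq_zero (f := fun j => M j (σ j)) (Finset.mem_univ i) hi, mul_zero]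
    have hflip : ∀ σ : Equiv.Perm (Fin k), (∀ x ∈ c0.support, σ x = x) →
        F (σ * c0) = -F σ := by
      intro σ hfix
      exact term_flip CS hd ⟨hEC.1, hEC.2.1, hEC.2.2⟩ hfix
    have hcaseA : ∀ σ : Equiv.Perm (Fin k), (∀ i, M i (σ i) ≠ 0) →
        (∀ x ∈ c0.support, σ x = c0 x) →
        ((∀ i, M i ((σ * c0⁻¹) i) ≠ 0) ∧ (∀ x ∈ c0.support, (σ * c0⁻¹) x = x)
          ∧ F σ + F (σ * c0⁻¹) = 0) := by
      intro σ hΩ hagr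
      have hfix' : ∀ x ∈ c0.support, (σ * c0⁻¹) x = x := by
        intro x hx
        have h1 : c0⁻¹ x ∈ c0.support := by
          rw [← Equiv.Perm.support_inv]
          exact Equiv.Perm.apply_mem_support.mpr (by rw [Equiv.Perm.support_inv]; exact hx)
        rw [Equiv.Perm.mul_apply, hagr _ h1, Equiv.Perm.coe_inv, Equiv.apply_symm_apply]
      refine ⟨?_, hfix', ?_⟩
      · intro i
        by_cases hi : i ∈ c0.support
        · rw [hfix' i hi]
          exact hd i
        · have hci : c0 i = i := Equiv.Perm.notMem_support.mp hi
          have hinv : c0⁻¹ i = i := by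
            apply Equiv.injective c0
            rw [Equiv.Perm.coe_inv, Equiv.apply_symm_apply, hci]
          rw [Equiv.Perm.mul_apply, hinv]
          exact hΩ i
      · have := hflip (σ * c0⁻¹) hfix'
        rw [inv_mul_cancel_right] at this
        rw [this]
        ring
    have hcaseB : ∀ σ : Equiv.Perm (Fin k), (∀ i, M i (σ i) ≠ 0) →
        (∀ x ∈ c0.support, σ x = x) →
        ((∀ i, M i ((σ * c0) i) ≠ 0) ∧ (∀ x ∈ c0.support, (σ * c0) x = c0 x)
          ∧ F σ + F (σ * c0) = 0) := by
      intro σ hΩ hfix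
      have hagr' : ∀ x ∈ c0.support, (σ * c0) x = c0 x := by
        intro x hx
        rw [Equiv.Perm.mul_apply, hfix _ (Equiv.Perm.apply_mem_support.mpr hx)]
      refine ⟨?_, hagr', ?_⟩
      · intro i
        by_cases hi : i ∈ c0.support
        · rw [hagr' i hi]
          exact hEC.2.1 i hi
        · rw [Equiv.Perm.mul_apply, Equiv.Perm.notMem_support.mp hi]
          exact hΩ i
      · rw [hflip σ hfix]
        ring
    have hdich := fun (σ : Equiv.Perm (Fin k)) (hΩ : ∀ i, M i (σ i) ≠ 0) =>
      ec_dichotomy CS hd hEC hΩ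
    have hAB_exclusive : ∀ σ : Equiv.Perm (Fin k),
        (∀ x ∈ c0.support, σ x = c0 x) → ¬(∀ x ∈ c0.support, σ x = x) := by
      intro σ hagr hfix
      have h1 := hagr x₀ hx₀
      have h2 := hfix x₀ hx₀
      rw [h2] at h1
      exact (Equiv.Perm.mem_support.mp hx₀) h1.symm
    refine Finset.sum_involution (fun σ _ => ι σ) ?_ ?_ (fun σ ha => Finset.mem_univ _) ?_
    · -- sum of pairs is zero
      intro σ _
      show F σ + F (ι σ) = 0
      by_cases hΩ : ∀ i, M i (σ i) ≠ 0
      · rcases hdich σ hΩ with hagr | hfix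
        · have hι1 : ι σ = σ * c0⁻¹ := by simp only [hι]; rw [if_pos hΩ, if_pos hagr]
          rw [hι1]
          exact (hcaseA σ hΩ hagr).2.2
        · have hι1 : ι σ = σ * c0 := by
            rw [hι]
            simp only [if_pos hΩ]
            rw [if_neg]
            intro hagr
            exact hAB_exclusive σ hagr hfix
          rw [hι1]
          exact (hcaseB σ hΩ hfix).2.2
      · have hι1 : ι σ = σ := by simp only [hι]; rw [if_neg hΩ]
        rw [hι1, hFzero σ hΩ]
        ring
    · -- ι moves σ when the term is nonzero
      intro σ _ hFσ
      show ι σ ≠ σ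
      have hFσ' : F σ ≠ 0 := hFσ
      have hΩ : ∀ i, M i (σ i) ≠ 0 := by
        by_contra hn
        exact hFσ' (hFzero σ hn)
      have hc0ne : c0 ≠ 1 := hEC.1.ne_one
      rcases hdich σ hΩ with hagr | hfix
      · have hι1 : ι σ = σ * c0⁻¹ := by simp only [hι]; rw [if_pos hΩ, if_pos hagr]
        rw [hι1]
        intro hcontra
        apply hc0ne
        have h3 : c0⁻¹ = 1 := mul_left_cancel (a := σ) (by rw [mul_one]; exact hcontra)
        apply inv_injective
        rw [h3, inv_one]
      · have hι1 : ι σ = σ * c0 := by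
          simp only [hι]
          rw [if_pos hΩ, if_neg (fun hagr => hAB_exclusive σ hagr hfix)]
        rw [hι1]
        intro hcontra
        apply hc0ne
        exact mul_left_cancel (a := σ) (by rw [mul_one]; exact hcontra)
    · -- involution
      intro σ _
      show ι (ι σ) = σ
      by_cases hΩ : ∀ i, M i (σ i) ≠ 0
      · rcases hdich σ hΩ with hagr | hfix
        · have hι1 : ι σ = σ * c0⁻¹ := by simp only [hι]; rw [if_pos hΩ, if_pos hagr]
          obtain ⟨hΩ', hfix', _⟩ := hcaseA σ hΩ hagr
          have hι2 : ι (σ * c0⁻¹) = (σ * c0⁻¹) * c0 := by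
            simp only [hι]
            rw [if_pos hΩ', if_neg (fun hagr' => hAB_exclusive (σ * c0⁻¹) hagr' hfix')]
          rw [hι1, hι2, inv_mul_cancel_right]
        · have hι1 : ι σ = σ * c0 := by
            simp only [hι]
            rw [if_pos hΩ, if_neg (fun hagr => hAB_exclusive σ hagr hfix)]
          obtain ⟨hΩ', hagr', _⟩ := hcaseB σ hΩ hfix
          have hι2 : ι (σ * c0) = (σ * c0) * c0⁻¹ := by
            simp only [hι]
            rw [if_pos hΩ', if_pos hagr']
          rw [hι1, hι2, mul_inv_cancel_right]
      · have hι1 : ι σ = σ := by simp only [hι]; rw [if_neg hΩ]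
        rw [hι1, hι1]
  · -- no e-cycle : all nonzero terms have the same sign
    left
    intro B hB
    have hBzero : ∀ i j, B i j = 0 ↔ M i j = 0 := by
      intro i j
      constructor <;> intro h
      · have := hB i j
        rw [h, Real.sign_zero] at this
        exact Real.sign_eq_zero_iff.mp this.symm
      · have := hB i j
        rw [h, Real.sign_zero] at this
        exact Real.sign_eq_zero_iff.mp this
    set T : Equiv.Perm (Fin k) → ℝ :=
      fun σ => ((Equiv.Perm.sign σ : ℤ) : ℝ) * ∏ i, B i (σ i) with hT
    have hT1 : T 1 = ∏ i, B i i := by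
      show ((Equiv.Perm.sign (1 : Equiv.Perm (Fin k)) : ℤ) : ℝ) * ∏ i, B i ((1 : Equiv.Perm (Fin k)) i) = _
      simp
    have hT1ne : T 1 ≠ 0 := by
      rw [hT1]
      exact Finset.prod_ne_zero_iff.mpr
        (fun i _ => fun h => hd i ((hBzero i i).mp h))
    have hkey : ∀ N (σ : Equiv.Perm (Fin k)), σ.support.card ≤ N →
        (∀ i, M i (σ i) ≠ 0) → 0 < T σ * T 1 := by
      intro N
      induction N with
      | zero =>
        intro σ hcard _
        have : σ = 1 := by
          rw [← Equiv.Perm.support_eq_empty_iff]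
          exact Finset.card_eq_zero.mp (by omega)
        rw [this]
        exact mul_self_pos.mpr hT1ne
      | succ N ih =>
        intro σ hcard hΩ
        by_cases h1 : σ = 1
        · rw [h1]
          exact mul_self_pos.mpr hT1ne
        · obtain ⟨x, hx⟩ : ∃ x, σ x ≠ x := by
            by_contra hno
            push_neg at hno
            exact h1 (Equiv.ext hno)
          set g := σ.cycleOf x with hg
          have hgcyc : g.IsCycle := Equiv.Perm.isCycle_cycleOf σ hx
          have hg_agree : ∀ z ∈ g.support, g z = σ z := by
            intro z hz
            rw [hg, Equiv.Perm.mem_support_cycleOf_iff] at hz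
            rw [hg, Equiv.Perm.cycleOf_apply, if_pos hz.1]
          have hgv : Vld M g := by
            intro z hz
            rw [hg_agree z hz]
            exact hΩ z
          have hWg : W M g = -1 := by
            rcases W_pm hd hgv with h | h
            · exact absurd ⟨g, hgcyc, hgv, h⟩ hex
            · exact h
          set σ' := σ * g⁻¹ with hσ'
          have hσ'_fix : ∀ z ∈ g.support, σ' z = z := by
            intro z hz
            have h1' : g⁻¹ z ∈ g.support := by
              rw [← Equiv.Perm.support_inv]
              exact Equiv.Perm.apply_mem_support.mpr
                (by rw [Equiv.Perm.support_inv]; exact hz)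
            rw [hσ', Equiv.Perm.mul_apply, ← hg_agree _ h1', Equiv.Perm.coe_inv, Equiv.apply_symm_apply]
          have hσ'_off : ∀ z, z ∉ g.support → σ' z = σ z := by
            intro z hz
            have : g⁻¹ z = z := by
              apply Equiv.injective g
              rw [Equiv.Perm.coe_inv, Equiv.apply_symm_apply, Equiv.Perm.notMem_support.mp hz]
            rw [hσ', Equiv.Perm.mul_apply, this]
          have hσ'Ω : ∀ i, M i (σ' i) ≠ 0 := by
            intro i
            by_cases hi : i ∈ g.support
            · rw [hσ'_fix i hi]; exact hd i
            · rw [hσ'_off i hi]; exact hΩ i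
          have hsupp' : σ'.support = σ.support \ g.support := by
            ext z
            rw [Equiv.Perm.mem_support, Finset.mem_sdiff, Equiv.Perm.mem_support]
            by_cases hz : z ∈ g.support
            · constructor
              · intro hne; exact absurd (hσ'_fix z hz) hne
              · rintro ⟨_, hzg⟩; exact absurd hz hzg
            · rw [hσ'_off z hz]
              exact ⟨fun h => ⟨h, hz⟩, fun h => h.1⟩
          have hgsub : g.support ⊆ σ.support := by
            rw [hg]
            exact Equiv.Perm.support_cycleOf_le σ x
          have hcard' : σ'.support.card ≤ N := by
            rw [hsupp', Finset.card_sdiff_of_subset hgsub]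
            have := hgcyc.two_le_card_support
            omega
          have IH := ih σ' hcard' hσ'Ω
          -- same-sign step
          have hstep : 0 < T σ * T σ' := by
            have hσeq : σ = σ' * g := by rw [hσ', inv_mul_cancel_right]
            have hsign : ((Equiv.Perm.sign σ : ℤ) : ℝ)
                = ((Equiv.Perm.sign σ' : ℤ) : ℝ) * (-(-1:ℝ)^g.support.card) := by
              rw [hσeq, map_mul, Units.val_mul, Int.cast_mul, sign_cast_cycle hgcyc]
            have hprodσ : ∏ i, B i (σ i)
                = (∏ z ∈ g.support, B z (g z)) * ∏ z ∈ g.supportᶜ, B z (σ' z) := by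
              rw [← Finset.prod_mul_prod_compl g.support]
              congr 1
              · exact Finset.prod_congr rfl (fun z hz => by rw [← hg_agree z hz])
              · exact Finset.prod_congr rfl
                  (fun z hz => by rw [hσ'_off z (Finset.mem_compl.mp hz)])
            have hprodσ' : ∏ i, B i (σ' i)
                = (∏ z ∈ g.support, B z z) * ∏ z ∈ g.supportᶜ, B z (σ' z) := by
              rw [← Finset.prod_mul_prod_compl g.support]
              congr 1
              exact Finset.prod_congr rfl (fun z hz => by rw [hσ'_fix z hz])
            -- sign content of the cycle for B
            have hsgn : ∏ z ∈ g.support,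
                (Real.sign (B z z) * Real.sign (B z (g z))) = -(-1:ℝ)^g.support.card := by
              have h1 : ∏ z ∈ g.support, (Real.sign (B z z) * Real.sign (B z (g z)))
                  = ∏ z ∈ g.support, gW M g z := by
                refine Finset.prod_congr rfl (fun z hz => ?_)
                unfold gW
                rw [hB z z, hB z (g z)]
              rw [h1]
              have h := hWg
              rw [W_eq'] at h
              calc ∏ x ∈ g.support, gW M g x
                  = (-1:ℝ)^g.support.card * ((-1:ℝ)^g.support.card
                    * ∏ x ∈ g.support, gW M g x) := by
                    rw [← mul_assoc, ← pow_add, Even.neg_one_pow ⟨g.support.card, rfl⟩,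
                      one_mul]
                _ = (-1:ℝ)^g.support.card * (-1) := by rw [h]
                _ = -(-1:ℝ)^g.support.card := by ring
            -- decompose the support product into signs and absolute values
            have hdecomp : (∏ z ∈ g.support, B z (g z)) * (∏ z ∈ g.support, B z z)
                = (-(-1:ℝ)^g.support.card)
                  * ∏ z ∈ g.support, (|B z (g z)| * |B z z|) := by
              calc (∏ z ∈ g.support, B z (g z)) * (∏ z ∈ g.support, B z z)
                  = ∏ z ∈ g.support, (B z (g z) * B z z) := by
                    rw [Finset.prod_mul_distrib]
                _ = ∏ z ∈ g.support, ((Real.sign (B z z) * Real.sign (B z (g z)))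
                    * (|B z (g z)| * |B z z|)) := by
                    refine Finset.prod_congr rfl (fun z hz => ?_)
                    nth_rewrite 1 [eq_sign_mul_abs (B z (g z)), eq_sign_mul_abs (B z z)]
                    ring
                _ = (∏ z ∈ g.support, (Real.sign (B z z) * Real.sign (B z (g z))))
                    * ∏ z ∈ g.support, (|B z (g z)| * |B z z|) := by
                    rw [Finset.prod_mul_distrib]
                _ = (-(-1:ℝ)^g.support.card)
                    * ∏ z ∈ g.support, (|B z (g z)| * |B z z|) := by rw [hsgn]
            have habs_pos : 0 < ∏ z ∈ g.support, (|B z (g z)| * |B z z|) := by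
              apply Finset.prod_pos
              intro z hz
              apply mul_pos
              · exact abs_pos.mpr (fun h => (hgv z hz) ((hBzero _ _).mp h))
              · exact abs_pos.mpr (fun h => (hd z) ((hBzero _ _).mp h))
            have hC_ne : (∏ z ∈ g.supportᶜ, B z (σ' z)) ≠ 0 :=
              Finset.prod_ne_zero_iff.mpr
                (fun z _ => fun h => (hσ'Ω z) ((hBzero _ _).mp h))
            have hKK : (-1:ℝ)^g.support.card * (-1:ℝ)^g.support.card = 1 := by
              rw [← pow_add]
              exact Even.neg_one_pow ⟨g.support.card, rfl⟩
            have hTT : T σ * T σ'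
                = (((Equiv.Perm.sign σ' : ℤ) : ℝ) * ((Equiv.Perm.sign σ' : ℤ) : ℝ))
                  * ((-(-1:ℝ)^g.support.card) * (-(-1:ℝ)^g.support.card))
                  * (∏ z ∈ g.support, (|B z (g z)| * |B z z|))
                  * ((∏ z ∈ g.supportᶜ, B z (σ' z)) * ∏ z ∈ g.supportᶜ, B z (σ' z)) := by
              show (((Equiv.Perm.sign σ : ℤ) : ℝ) * ∏ i, B i (σ i))
                * (((Equiv.Perm.sign σ' : ℤ) : ℝ) * ∏ i, B i (σ' i)) = _
              rw [hsign, hprodσ, hprodσ']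
              calc ((Equiv.Perm.sign σ' : ℤ) : ℝ) * (-(-1:ℝ)^g.support.card)
                    * ((∏ z ∈ g.support, B z (g z)) * ∏ z ∈ g.supportᶜ, B z (σ' z))
                    * (((Equiv.Perm.sign σ' : ℤ) : ℝ)
                      * ((∏ z ∈ g.support, B z z) * ∏ z ∈ g.supportᶜ, B z (σ' z)))
                  = (((Equiv.Perm.sign σ' : ℤ) : ℝ) * ((Equiv.Perm.sign σ' : ℤ) : ℝ))
                    * (-(-1:ℝ)^g.support.card)
                    * ((∏ z ∈ g.support, B z (g z)) * (∏ z ∈ g.support, B z z))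
                    * ((∏ z ∈ g.supportᶜ, B z (σ' z)) * ∏ z ∈ g.supportᶜ, B z (σ' z)) := by
                    ring
                _ = _ := by rw [hdecomp]; ring
            rw [hTT, sign_cast_sq]
            have h2 : (-(-1:ℝ)^g.support.card) * (-(-1:ℝ)^g.support.card) = 1 := by
              rw [show (-(-1:ℝ)^g.support.card) * (-(-1:ℝ)^g.support.card)
                = (-1:ℝ)^g.support.card * (-1:ℝ)^g.support.card from by ring, hKK]
            rw [h2, one_mul, one_mul]
            exact mul_pos habs_pos (mul_self_pos.mpr hC_ne)
          have hTσ'_ne : T σ' ≠ 0 := by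
            intro h
            rw [h] at IH
            simp at IH
          nlinarith [mul_pos hstep IH, mul_self_pos.mpr hTσ'_ne]
    -- conclude
    intro hdet
    have hsum : B.det * T 1 = ∑ σ : Equiv.Perm (Fin k), T σ * T 1 := by
      rw [det_eq_sum B, Finset.sum_mul]
    have hpos : 0 < B.det * T 1 := by
      rw [hsum]
      apply Finset.sum_pos'
      · intro σ _
        by_cases hΩ : ∀ i, M i (σ i) ≠ 0
        · exact le_of_lt (hkey σ.support.card σ (le_refl _) hΩ)
        · push_neg at hΩ
          obtain ⟨i, hi⟩ := hΩ
          have : T σ = 0 := by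
            show ((Equiv.Perm.sign σ : ℤ) : ℝ) * ∏ j, B j (σ j) = 0
            rw [Finset.prod_eq_zero (f := fun j => B j (σ j)) (Finset.mem_univ i)
              ((hBzero _ _).mpr hi), mul_zero]
          rw [this, zero_mul]
      · exact ⟨1, Finset.mem_univ _, hkey 0 1 (by simp) (fun i => by simpa using hd i)⟩
    rw [hdet, zero_mul] at hpos
    exact lt_irrefl 0 hpos

end SSDProof
open SRGraph in
/-- If the SR graph of `S` satisfies Condition (*) — every e-cycle is an s-cycle and no
two e-cycles with distinct edge sets have S-to-R intersection — then `S` is SSD: every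
square submatrix of `S` is sign nonsingular or has determinant zero. -/
theorem conditionStar_implies_SSD {n m : ℕ} (S : Matrix (Fin n) (Fin m) ℝ)
    (h : ConditionStar S) : SSD S := by
  intro k ρ cc hρ hcc
  classical
  by_cases hβ : ∃ β : Equiv.Perm (Fin k), ∀ i, (S.submatrix ρ cc) i (β i) ≠ 0
  · obtain ⟨β, hβ0⟩ := hβ
    have hκ : Function.Injective (cc ∘ ⇑β) := hcc.comp β.injective
    have hd : ∀ i, (S.submatrix ρ (cc ∘ ⇑β)) i i ≠ 0 := fun i => hβ0 i
    have hCS := SSDProof.conditionStar_submatrix S hρ hκ h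
    have hdet_rel : ((S.submatrix ρ cc).submatrix id ⇑β) = S.submatrix ρ (cc ∘ ⇑β) := rfl
    rcases SSDProof.Mmain hCS hd with hSNS | hdet
    · left
      intro B hB hdetB
      have hB' : SameSignPattern (B.submatrix id ⇑β) (S.submatrix ρ (cc ∘ ⇑β)) :=
        fun i j => hB i (β j)
      apply hSNS _ hB'
      rw [Matrix.det_permute', hdetB, mul_zero]
    · right
      rw [← hdet_rel, Matrix.det_permute'] at hdet
      rcases mul_eq_zero.mp hdet with h0 | h0
      · exfalso
        rcases Int.units_eq_one_or (Equiv.Perm.sign β) with hs | hs <;>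
          rw [hs] at h0 <;> norm_num at h0
      · exact h0
  · right
    push_neg at hβ
    rw [Matrix.det_apply]
    apply Finset.sum_eq_zero
    intro σ _
    obtain ⟨i, hi⟩ := hβ σ⁻¹
    have hzero : (S.submatrix ρ cc) (σ (σ⁻¹ i)) (σ⁻¹ i) = 0 := by
      rw [Equiv.Perm.coe_inv, Equiv.apply_symm_apply]
      exact hi
    rw [Finset.prod_eq_zero (f := fun j => (S.submatrix ρ cc) (σ j) j)
      (Finset.mem_univ (σ⁻¹ i)) hzero, smul_zero]
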